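/- arXiv:1609.03101 — 3 statements merged into one kernel-verified Lean document; each statement's English description precedes it below -/
import Mathlib

section
/- For every even integer n ≥ 6 the following holds. Let A and B be disjoint sets with |A ∪ B| = n, where |A| = n/2 − 1 if 8 divides n and |A| = n/2 otherwise, and let H* be the 4-graph with vertex set A ∪ B whose edges are exactly the 4-element subsets e of A ∪ B with |e ∩ A| odd. Then δ(H*) = n/2 − 3 if 8 divides n and δ(H*) = n/2 − 2 otherwise, and H* contains no Hamilton 2-cycle. -/
open Finset

namespace HamiltonTwoCycles

/-- The number of edges of `E` containing the vertex set `S` (degree/codegree of `S`). -/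
def deg {n : ℕ} (E : Finset (Finset (Fin n))) (S : Finset (Fin n)) : ℕ :=
  (E.filter fun e => S ⊆ e).card

/-- `E` is the edge set of a 4-uniform hypergraph on the vertex set `Fin n`. -/
def Is4Graph {n : ℕ} (E : Finset (Finset (Fin n))) : Prop :=
  ∀ e ∈ E, e.card = 4

/-- The minimum codegree of the 4-graph `E` is at least the real number `x`. -/
def MinCodegGE {n : ℕ} (E : Finset (Finset (Fin n))) (x : ℝ) : Prop :=
  ∀ S : Finset (Fin n), S.card = 3 → x ≤ (deg E S : ℝ)

/-- The 4-graph `E` on `Fin n` contains a Hamilton 2-cycle: a cyclic ordering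
`f 0, f 1, …, f (n-1)` of all vertices such that each of the `n/2` quadruples of four
cyclically consecutive vertices starting at an even position forms an edge. -/
def HamCycle2 (n : ℕ) (E : Finset (Finset (Fin n))) : Prop :=
  Even n ∧ ∃ f : ZMod n → Fin n, Function.Bijective f ∧
    ∀ j : ℕ, j < n / 2 →
      ({f (2*j), f (2*j+1), f (2*j+2), f (2*j+3)} : Finset (Fin n)) ∈ E

/-- `f 0, f 1, …, f (2ℓ+1)` is a 2-path of length `ℓ` in the 4-graph `E`:
the vertices are distinct and each of the `ℓ` quadruples of consecutive vertices
starting at an even position forms an edge. -/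
def IsPath2 (n : ℕ) (E : Finset (Finset (Fin n))) (ℓ : ℕ) (f : ℕ → Fin n) : Prop :=
  Set.InjOn f (Set.Iio (2*ℓ+2)) ∧
  ∀ j : ℕ, j < ℓ →
    ({f (2*j), f (2*j+1), f (2*j+2), f (2*j+3)} : Finset (Fin n)) ∈ E

/-- The vertex set of the 2-path of length `ℓ` described by `f`. -/
def pathVerts (n ℓ : ℕ) (f : ℕ → Fin n) : Finset (Fin n) :=
  (Finset.range (2*ℓ+2)).image f

/-- The unordered pair of ends `{e₁, e₂}` equals the unordered pair `{q₁, q₂}`. -/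
def EndsMatch {n : ℕ} (e₁ e₂ q₁ q₂ : Finset (Fin n)) : Prop :=
  (e₁ = q₁ ∧ e₂ = q₂) ∨ (e₁ = q₂ ∧ e₂ = q₁)

/-- The 4-graph `E` contains a Hamilton 2-path whose ends are `p₁` and `p₂`. -/
def HamPath2Ends (n : ℕ) (E : Finset (Finset (Fin n))) (p₁ p₂ : Finset (Fin n)) : Prop :=
  ∃ (ℓ : ℕ) (f : ℕ → Fin n), IsPath2 n E ℓ f ∧ pathVerts n ℓ f = Finset.univ ∧
    EndsMatch {f 0, f 1} {f (2*ℓ), f (2*ℓ+1)} p₁ p₂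

/-- The total 2-pathlength of the 4-graph `E` is at least `t`: there are vertex-disjoint
2-paths in `E` whose lengths sum to at least `t`. -/
def TotalPathlengthGE (n : ℕ) (E : Finset (Finset (Fin n))) (t : ℕ) : Prop :=
  ∃ (k : ℕ) (ℓ : ℕ → ℕ) (f : ℕ → ℕ → Fin n),
    (∀ i < k, IsPath2 n E (ℓ i) (f i)) ∧
    (∀ i < k, ∀ j < k, i ≠ j →
      Disjoint (pathVerts n (ℓ i) (f i)) (pathVerts n (ℓ j) (f j))) ∧
    t ≤ ∑ i ∈ Finset.range k, ℓ i

/-- The odd edges of `E` with respect to the bipartition `{A, Aᶜ}`. -/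
def oddEdges {n : ℕ} (E : Finset (Finset (Fin n))) (A : Finset (Fin n)) :
    Finset (Finset (Fin n)) :=
  E.filter fun e => Odd (e ∩ A).card

/-- The even edges of `E` with respect to the bipartition `{A, Aᶜ}`. -/
def evenEdges {n : ℕ} (E : Finset (Finset (Fin n))) (A : Finset (Fin n)) :
    Finset (Finset (Fin n)) :=
  E.filter fun e => Even (e ∩ A).card

/-- `p` is a split pair with respect to the bipartition `{A, Aᶜ}`. -/
def SplitPair {n : ℕ} (A p : Finset (Fin n)) : Prop :=
  p.card = 2 ∧ (p ∩ A).card = 1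

/-- `p` is a connate pair with respect to the bipartition `{A, Aᶜ}`. -/
def ConnatePair {n : ℕ} (A p : Finset (Fin n)) : Prop :=
  p.card = 2 ∧ (p ∩ A).card ≠ 1

/-- The bipartition `{A, Aᶜ}` of the vertex set of the 4-graph `E` is even-good. -/
def EvenGood (n : ℕ) (E : Finset (Finset (Fin n))) (A : Finset (Fin n)) : Prop :=
  (Even A.card ∨ A.card = Aᶜ.card) ∨
  (∃ e ∈ oddEdges E A, ∃ e' ∈ oddEdges E A,
      e ∩ e' = ∅ ∨ SplitPair A (e ∩ e')) ∨
  (A.card = Aᶜ.card + 2 ∧ ∃ e ∈ oddEdges E A, ∃ e' ∈ oddEdges E A,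
      (e ∩ e').card = 2 ∧ e ∩ e' ⊆ A) ∨
  (Aᶜ.card = A.card + 2 ∧ ∃ e ∈ oddEdges E A, ∃ e' ∈ oddEdges E A,
      (e ∩ e').card = 2 ∧ e ∩ e' ⊆ Aᶜ)

/-- The bipartition `{A, Aᶜ}` of the vertex set of the 4-graph `E` is odd-good. -/
def OddGood (n : ℕ) (E : Finset (Finset (Fin n))) (A : Finset (Fin n)) : Prop :=
  ∃ m d : ℕ, (m = 0 ∨ m = 2 ∨ m = 4 ∨ m = 6) ∧ (d = 0 ∨ d = 2) ∧
    m % 8 = n % 8 ∧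
    (d : ℤ) % 4 = ((A.card : ℤ) - (Aᶜ.card : ℤ)) % 4 ∧
    (((m = 0 ∧ d = 0) ∨ (m = 4 ∧ d = 2)) ∨
     (((m = 2 ∧ d = 2) ∨ (m = 6 ∧ d = 0)) ∧ (evenEdges E A).Nonempty) ∨
     (((m = 4 ∧ d = 0) ∨ (m = 0 ∧ d = 2)) ∧ TotalPathlengthGE n (evenEdges E A) 2) ∨
     (((m = 6 ∧ d = 2) ∨ (m = 2 ∧ d = 0)) ∧
       ((∃ e ∈ evenEdges E A, (e ∩ A).card = 2 ∧ (e ∩ Aᶜ).card = 2) ∨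
        TotalPathlengthGE n (evenEdges E A) 3)))

/-- The bipartition `{A, Aᶜ}` is `c`-even-extremal. -/
def EvenExtremalBip (n : ℕ) (E : Finset (Finset (Fin n))) (c : ℝ)
    (A : Finset (Fin n)) : Prop :=
  (n : ℝ)/2 - c*n ≤ (A.card : ℝ) ∧ (A.card : ℝ) ≤ (n : ℝ)/2 + c*n ∧
  ((oddEdges E A).card : ℝ) ≤ c * (n.choose 4 : ℝ)

/-- The 4-graph `E` is `c`-even-extremal. -/
def EvenExtremal (n : ℕ) (E : Finset (Finset (Fin n))) (c : ℝ) : Prop :=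
  ∃ A : Finset (Fin n), EvenExtremalBip n E c A

/-- The bipartition `{A, Aᶜ}` is `c`-odd-extremal. -/
def OddExtremalBip (n : ℕ) (E : Finset (Finset (Fin n))) (c : ℝ)
    (A : Finset (Fin n)) : Prop :=
  (n : ℝ)/2 - c*n ≤ (A.card : ℝ) ∧ (A.card : ℝ) ≤ (n : ℝ)/2 + c*n ∧
  ((evenEdges E A).card : ℝ) ≤ c * (n.choose 4 : ℝ)

/-- The 4-graph `E` is `c`-odd-extremal. -/
def OddExtremal (n : ℕ) (E : Finset (Finset (Fin n))) (c : ℝ) : Prop :=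
  ∃ A : Finset (Fin n), OddExtremalBip n E c A

/-- The number of (vertex-sequence) 2-paths of length `ℓ` in `E` whose ends are the
pairs `p₁` and `p₂`. -/
noncomputable def pathCount (n : ℕ) (E : Finset (Finset (Fin n))) (ℓ : ℕ)
    (p₁ p₂ : Finset (Fin n)) : ℕ :=
  Nat.card {f : Fin (2*ℓ+2) → Fin n //
    IsPath2 n E ℓ (fun i => f ⟨i % (2*ℓ+2), Nat.mod_lt i (by omega)⟩) ∧
    EndsMatch {f ⟨0, by omega⟩, f ⟨1, by omega⟩}
      {f ⟨2*ℓ, by omega⟩, f ⟨2*ℓ+1, by omega⟩} p₁ p₂}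

/-- The 4-graph `E` on `n` vertices is `κ`-connecting. -/
def Connecting (n : ℕ) (E : Finset (Finset (Fin n))) (κ : ℝ) : Prop :=
  ∀ p₁ p₂ : Finset (Fin n), p₁.card = 2 → p₂.card = 2 → Disjoint p₁ p₂ →
    κ * (n : ℝ)^2 ≤ (pathCount n E 2 p₁ p₂ : ℝ) ∨
    κ * (n : ℝ)^4 ≤ (pathCount n E 3 p₁ p₂ : ℝ)

/-- The ordered octuple `O` is an absorbing structure for the pair `p` in the 4-graph `E`. -/
def AbsorbStruct (n : ℕ) (E : Finset (Finset (Fin n))) (p : Finset (Fin n))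
    (O : Fin 8 → Fin n) : Prop :=
  Function.Injective O ∧
  (∃ f : ℕ → Fin n, IsPath2 n E 3 f ∧
      pathVerts n 3 f = Finset.univ.image O ∧
      EndsMatch {f 0, f 1} {f 6, f 7} {O 0, O 1} {O 6, O 7}) ∧
  (∃ f : ℕ → Fin n, IsPath2 n E 4 f ∧
      pathVerts n 4 f = Finset.univ.image O ∪ p ∧
      EndsMatch {f 0, f 1} {f 8, f 9} {O 0, O 1} {O 6, O 7})

/-- The pair `p` is `β`-absorbable in the 4-graph `E`. -/
def Absorbable (n : ℕ) (E : Finset (Finset (Fin n))) (β : ℝ) (p : Finset (Fin n)) : Prop :=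
  β * (n : ℝ)^8 ≤ (Nat.card {O : Fin 8 → Fin n // AbsorbStruct n E p O} : ℝ)

/-- The 4-graph `E` is `(α,β)`-absorbing. -/
def Absorbing (n : ℕ) (E : Finset (Finset (Fin n))) (α β : ℝ) : Prop :=
  (Nat.card {p : Finset (Fin n) // p.card = 2 ∧ ¬ Absorbable n E β p} : ℝ) ≤ α * (n : ℝ)^2

/-- `g 0, …, g (m-1)` is a 2-cycle on `m` vertices in the 4-graph `E`. -/
def IsCycle2 (n : ℕ) (E : Finset (Finset (Fin n))) (m : ℕ) (g : ℕ → Fin n) : Prop :=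
  4 ≤ m ∧ Even m ∧ Set.InjOn g (Set.Iio m) ∧
  ∀ j : ℕ, j < m / 2 →
    ({g ((2*j) % m), g ((2*j+1) % m), g ((2*j+2) % m), g ((2*j+3) % m)} :
      Finset (Fin n)) ∈ E

/-- The vertex set of the 2-cycle on `m` vertices described by `g`. -/
def cycVerts (n m : ℕ) (g : ℕ → Fin n) : Finset (Fin n) :=
  (Finset.range m).image g

/-- The 2-path `f` (of length `ℓ`) is a segment of the 2-cycle `g` (on `m` vertices). -/
def IsSegment (n m : ℕ) (g : ℕ → Fin n) (ℓ : ℕ) (f : ℕ → Fin n) : Prop :=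
  2*ℓ+2 ≤ m ∧ ∃ t : ℕ, Even t ∧ ∀ i < 2*ℓ+2, f i = g ((t + i) % m)

/-- The 2-graph `G` contains a perfect matching on the vertex set `S`. -/
def PerfectMatchingOn (n : ℕ) (G : Finset (Finset (Fin n))) (S : Finset (Fin n)) : Prop :=
  ∃ M ⊆ G, (∀ p ∈ M, ∀ q ∈ M, p ≠ q → Disjoint p q) ∧ M.biUnion id = S

/-- `v` is a `β`-fine vertex of the 4-graph `E` on `n` vertices. -/
def FineVertex (n : ℕ) (E : Finset (Finset (Fin n))) (β : ℝ) (v : Fin n) : Prop :=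
  (1 - β^3) * (n.choose 3 : ℝ) ≤ (deg E {v} : ℝ)

/-- `p` is a `β`-fine pair of the 4-graph `E` on `n` vertices. -/
def FinePair (n : ℕ) (E : Finset (Finset (Fin n))) (β : ℝ) (p : Finset (Fin n)) : Prop :=
  p.card = 2 ∧ (1 - β^2) * (n.choose 2 : ℝ) ≤ (deg E p : ℝ)

/-- `S` is a `β`-fine triple of the 4-graph `E` on `n` vertices. -/
def FineTriple (n : ℕ) (E : Finset (Finset (Fin n))) (β : ℝ) (S : Finset (Fin n)) : Prop :=
  S.card = 3 ∧ (1 - β) * (n : ℝ) ≤ (deg E S : ℝ)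

/-- `v` is a `γ`-good vertex with respect to the edge collection `F` (e.g. the even or
the odd edges of a 4-graph on `n` vertices). -/
def GoodVertexFor (n : ℕ) (F : Finset (Finset (Fin n))) (γ : ℝ) (v : Fin n) : Prop :=
  (1/2 - γ^5) * (n.choose 3 : ℝ) ≤ (deg F {v} : ℝ)

/-- `p` is a `γ`-good pair with respect to the edge collection `F`. -/
def GoodPairFor (n : ℕ) (F : Finset (Finset (Fin n))) (γ : ℝ) (p : Finset (Fin n)) : Prop :=
  p.card = 2 ∧ (1/2 - γ^3) * (n.choose 2 : ℝ) ≤ (deg F p : ℝ)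

/-- `S` is a `γ`-good triple with respect to the edge collection `F`. -/
def GoodTripleFor (n : ℕ) (F : Finset (Finset (Fin n))) (γ : ℝ) (S : Finset (Fin n)) : Prop :=
  S.card = 3 ∧ (1/2 - γ) * (n : ℝ) ≤ (deg F S : ℝ)

/-- `p` is a `β₂`-medium pair with respect to the edge collection `F`. -/
def MediumPairFor (n : ℕ) (F : Finset (Finset (Fin n))) (β₂ : ℝ) (p : Finset (Fin n)) : Prop :=
  p.card = 2 ∧ β₂ * (n.choose 2 : ℝ) ≤ (deg F p : ℝ)

/-- `v` is a `(β₁,β₂)`-medium vertex w.r.t. the even edges of `(E, A)`: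
it lies in at least `β₁ n` pairs that are `β₂`-medium (for the even edges). -/
def MediumVertexE (n : ℕ) (E : Finset (Finset (Fin n))) (A : Finset (Fin n))
    (β₁ β₂ : ℝ) (v : Fin n) : Prop :=
  β₁ * (n : ℝ) ≤
    (Nat.card {p : Finset (Fin n) // v ∈ p ∧ MediumPairFor n (evenEdges E A) β₂ p} : ℝ)

/-- `v` is a `(β₁,β₂)`-medium vertex w.r.t. the odd edges of `(E, A)`:
at least `β₁ n` vertices of `A` and at least `β₁ n` vertices of `Aᶜ` form a
`β₂`-medium pair with `v` (for the odd edges). -/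
def MediumVertexO (n : ℕ) (E : Finset (Finset (Fin n))) (A : Finset (Fin n))
    (β₁ β₂ : ℝ) (v : Fin n) : Prop :=
  β₁ * (n : ℝ) ≤
    (Nat.card {a : Fin n // a ∈ A ∧ MediumPairFor n (oddEdges E A) β₂ {v, a}} : ℝ) ∧
  β₁ * (n : ℝ) ≤
    (Nat.card {b : Fin n // b ∈ Aᶜ ∧ MediumPairFor n (oddEdges E A) β₂ {v, b}} : ℝ)


lemma card_inter_quad {α : Type*} [DecidableEq α] (A : Finset α) (w x y z : α)
    (hwx : w ≠ x) (hwy : w ≠ y) (hwz : w ≠ z) (hxy : x ≠ y) (hxz : x ≠ z) (hyz : y ≠ z) :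
    (({w,x,y,z} : Finset α) ∩ A).card =
      (if w ∈ A then 1 else 0) + (if x ∈ A then 1 else 0) +
      (if y ∈ A then 1 else 0) + (if z ∈ A then 1 else 0) := by
  rw [← Finset.filter_mem_eq_inter, Finset.card_filter,
    Finset.sum_insert (by simp [hwx, hwy, hwz]),
    Finset.sum_insert (by simp [hxy, hxz]),
    Finset.sum_insert (by simp [hyz]), Finset.sum_singleton]
  ring

lemma deg_odd_val {n : ℕ} (A S : Finset (Fin n)) (hS : S.card = 3) :
    deg (oddEdges (Finset.powersetCard 4 (Finset.univ : Finset (Fin n))) A) S =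
      if Odd ((S ∩ A).card) then (Aᶜ \ S).card else (A \ S).card := by
  classical
  rw [deg, ← apply_ite Finset.card]
  refine (Finset.card_bij (fun v _ => insert v S) ?_ ?_ ?_).symm
  · intro v hv
    have hvS : v ∉ S := by
      split_ifs at hv with h
      · exact (Finset.mem_sdiff.mp hv).2
      · exact (Finset.mem_sdiff.mp hv).2
    have hins : ((insert v S) ∩ A).card = (S ∩ A).card + (if v ∈ A then 1 else 0) := by
      by_cases hvA : v ∈ A
      · rw [Finset.insert_inter_of_mem hvA,
          Finset.card_insert_of_notMem (fun hc => hvS (Finset.mem_of_mem_inter_left hc)),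
          if_pos hvA]
      · rw [Finset.insert_inter_of_notMem hvA, if_neg hvA, add_zero]
    simp only [oddEdges, Finset.mem_filter, Finset.mem_powersetCard]
    refine ⟨⟨⟨Finset.subset_univ _, by rw [Finset.card_insert_of_notMem hvS, hS]⟩, ?_⟩,
      Finset.subset_insert _ _⟩
    rw [hins]
    split_ifs at hv with h
    · have hvc : v ∉ A := by
        have := (Finset.mem_sdiff.mp hv).1
        simpa using this
      rw [if_neg hvc, add_zero]; exact h
    · have hvA : v ∈ A := (Finset.mem_sdiff.mp hv).1
      rw [if_pos hvA, Nat.odd_add_one]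
      exact h
  · intro v hv w hw heq
    have hvS : v ∉ S := by
      split_ifs at hv with h
      · exact (Finset.mem_sdiff.mp hv).2
      · exact (Finset.mem_sdiff.mp hv).2
    have heq' : insert v S = insert w S := heq
    have : v ∈ insert w S := heq' ▸ Finset.mem_insert_self v S
    rcases Finset.mem_insert.mp this with h | h
    · exact h
    · exact absurd h hvS
  · intro e he
    simp only [oddEdges, Finset.mem_filter, Finset.mem_powersetCard] at he
    obtain ⟨⟨⟨-, hcard⟩, hoddE⟩, hSe⟩ := he
    have h1 : (e \ S).card = 1 := by rw [Finset.card_sdiff_of_subset hSe, hcard, hS]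
    obtain ⟨v, hv⟩ := Finset.card_eq_one.mp h1
    have hvS : v ∉ S := by
      have : v ∈ e \ S := hv ▸ Finset.mem_singleton_self v
      exact (Finset.mem_sdiff.mp this).2
    have heq : insert v S = e := by
      have h2 := Finset.union_sdiff_of_subset hSe
      rw [hv] at h2
      rw [Finset.insert_eq, Finset.union_comm]
      exact h2
    have hins : (e ∩ A).card = (S ∩ A).card + (if v ∈ A then 1 else 0) := by
      rw [← heq]
      by_cases hvA : v ∈ A
      · rw [Finset.insert_inter_of_mem hvA,
          Finset.card_insert_of_notMem (fun hc => hvS (Finset.mem_of_mem_inter_left hc)),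
          if_pos hvA]
      · rw [Finset.insert_inter_of_notMem hvA, if_neg hvA, add_zero]
    refine ⟨v, ?_, heq⟩
    split_ifs with h
    · refine Finset.mem_sdiff.mpr ⟨?_, hvS⟩
      rw [Finset.mem_compl]
      intro hvA
      rw [hins, if_pos hvA, Nat.odd_add_one] at hoddE
      exact hoddE h
    · refine Finset.mem_sdiff.mpr ⟨?_, hvS⟩
      by_contra hvA
      rw [hins, if_neg hvA, add_zero] at hoddE
      exact h hoddE



def cpair {n : ℕ} (A : Finset (Fin n)) (f : ZMod n → Fin n) (j : ℕ) : ℕ :=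
  (if f ((2*j : ℕ) : ZMod n) ∈ A then 1 else 0) +
  (if f ((2*j+1 : ℕ) : ZMod n) ∈ A then 1 else 0)

lemma sum_cpair {n : ℕ} (A : Finset (Fin n)) (f : ZMod n → Fin n) (m : ℕ) :
    ∑ j ∈ Finset.range m, cpair A f j
      = ∑ i ∈ Finset.range (2*m), (if f ((i : ℕ) : ZMod n) ∈ A then 1 else 0) := by
  induction m with
  | zero => simp
  | succ k ih =>
    rw [Finset.sum_range_succ, ih, show 2*(k+1) = 2*k+1+1 from by ring,
      Finset.sum_range_succ, Finset.sum_range_succ]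
    simp only [cpair]
    ring

lemma sum_range_even_mod (t : ℕ) : (∑ j ∈ Finset.range (2*t), j) % 2 = t % 2 := by
  induction t with
  | zero => simp
  | succ k ih =>
    rw [show 2*(k+1) = 2*k+1+1 from by ring, Finset.sum_range_succ, Finset.sum_range_succ]
    omega

lemma no_ham {n : ℕ} (hn : 6 ≤ n) (hev : Even n) (A : Finset (Fin n))
    (hA : A.card = if 8 ∣ n then n / 2 - 1 else n / 2) :
    ¬ HamCycle2 n (oddEdges (Finset.powersetCard 4 (Finset.univ : Finset (Fin n))) A) := by
  classical
  rintro ⟨-, f, hbij, hedge⟩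
  have h2 : 2 ∣ n := hev.two_dvd
  have hnz : NeZero n := ⟨by omega⟩
  set m := n / 2 with hm
  have hnm : n = 2 * m := by omega
  have key : ∀ i j : ℕ, f (i : ZMod n) = f (j : ZMod n) ↔ i % n = j % n := by
    intro i j
    constructor
    · intro hf
      exact (ZMod.natCast_eq_natCast_iff i j n).mp (hbij.1 hf)
    · intro h
      have : (i : ZMod n) = (j : ZMod n) := (ZMod.natCast_eq_natCast_iff i j n).mpr h
      rw [this]
  have keyne : ∀ i j : ℕ, i < j → j < i + n → f (i : ZMod n) ≠ f (j : ZMod n) := by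
    intro i j h1 h2' hf
    have h := (key i j).mp hf
    have hd : n ∣ j - i := (Nat.modEq_iff_dvd' h1.le).mp h
    have := Nat.le_of_dvd (by omega) hd
    omega
  have hodd : ∀ j, j < m → (cpair A f j + cpair A f (j+1)) % 2 = 1 := by
    intro j hj
    have he := hedge j hj
    rw [oddEdges, Finset.mem_filter] at he
    have he2 := he.2
    have hEq : ({f ((2*j : ℕ) : ZMod n), f ((2*j+1 : ℕ) : ZMod n),
        f ((2*j+2 : ℕ) : ZMod n), f ((2*j+3 : ℕ) : ZMod n)} : Finset (Fin n))
        = {f (2*(j:ZMod n)), f (2*(j:ZMod n)+1), f (2*(j:ZMod n)+2), f (2*(j:ZMod n)+3)} := by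
      push_cast
      rfl
    rw [← hEq] at he2
    rw [card_inter_quad A _ _ _ _
      (keyne (2*j) (2*j+1) (by omega) (by omega))
      (keyne (2*j) (2*j+2) (by omega) (by omega))
      (keyne (2*j) (2*j+3) (by omega) (by omega))
      (keyne (2*j+1) (2*j+2) (by omega) (by omega))
      (keyne (2*j+1) (2*j+3) (by omega) (by omega))
      (keyne (2*j+2) (2*j+3) (by omega) (by omega))] at he2
    rw [Nat.odd_iff] at he2
    simp only [cpair]
    rw [show 2*(j+1) = 2*j+2 from by ring]
    rw [show 2*j+2+1 = 2*j+3 from by ring]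
    omega
  have hc0 : cpair A f m = cpair A f 0 := by
    simp only [cpair]
    have h1 : ((2*m : ℕ) : ZMod n) = ((2*0 : ℕ) : ZMod n) := by
      rw [← hnm]
      push_cast [ZMod.natCast_self]
      ring
    have h2' : ((2*m+1 : ℕ) : ZMod n) = ((2*0+1 : ℕ) : ZMod n) := by
      rw [show 2*m+1 = n+1 from by omega]
      push_cast [ZMod.natCast_self]
      ring
    rw [h1, h2']
  have hpar : ∀ j, j ≤ m → cpair A f j % 2 = (cpair A f 0 + j) % 2 := by
    intro j
    induction j with
    | zero => intro _; simp
    | succ k ih =>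
      intro hk
      have h1 := ih (by omega)
      have h2' := hodd k (by omega)
      omega
  have hm2 : m % 2 = 0 := by
    have h1 := hpar m le_rfl
    rw [hc0] at h1
    omega
  obtain ⟨t, ht⟩ : ∃ t, m = 2*t := ⟨m/2, by omega⟩
  have hAcard : ∑ x ∈ Finset.univ, (if x ∈ A then 1 else 0) = A.card := by
    rw [← Finset.card_filter]
    congr 1
    exact Finset.filter_univ_mem A
  have hreidx : ∑ i ∈ Finset.range n, (if f ((i : ℕ) : ZMod n) ∈ A then 1 else 0)
      = ∑ x ∈ Finset.univ, (if x ∈ A then 1 else 0) := by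
    refine Finset.sum_bij (fun (i : ℕ) (_ : i ∈ Finset.range n) => f (i : ZMod n)) ?_ ?_ ?_ ?_
    · intros; exact Finset.mem_univ _
    · intro i hi j hj hij
      rw [key] at hij
      rw [Finset.mem_range] at hi hj
      rwa [Nat.mod_eq_of_lt hi, Nat.mod_eq_of_lt hj] at hij
    · intro x _
      obtain ⟨i, rfl⟩ := hbij.2 x
      refine ⟨i.val, Finset.mem_range.mpr (ZMod.val_lt i), ?_⟩
      exact congrArg f (ZMod.natCast_rightInverse i)
    · intros; rfl
  have hsum : (∑ j ∈ Finset.range m, cpair A f j) = A.card := by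
    rw [sum_cpair, ← hnm, hreidx, hAcard]
  have hsump : A.card % 2 = (∑ j ∈ Finset.range m, (cpair A f 0 + j)) % 2 := by
    rw [← hsum, Finset.sum_nat_mod,
      Finset.sum_congr rfl (fun j hj => hpar j (le_of_lt (Finset.mem_range.mp hj))),
      ← Finset.sum_nat_mod]
  have hdistrib : ∑ j ∈ Finset.range m, (cpair A f 0 + j)
      = m * cpair A f 0 + ∑ j ∈ Finset.range m, j := by
    rw [Finset.sum_add_distrib, Finset.sum_const, Finset.card_range, smul_eq_mul]
  have hmc : m * cpair A f 0 = 2 * (t * cpair A f 0) := by rw [ht, Nat.mul_assoc]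
  have hG : (∑ j ∈ Finset.range m, j) % 2 = t % 2 := by
    rw [ht]; exact sum_range_even_mod t
  have hfinal : A.card % 2 = t % 2 := by
    rw [hdistrib] at hsump
    omega
  by_cases h8 : 8 ∣ n
  · rw [if_pos h8] at hA; omega
  · rw [if_neg h8] at hA; omega


end HamiltonTwoCycles

open HamiltonTwoCycles

/-- **Extremal example.** For every even `n ≥ 6`, with `A` of size `n/2 - 1` if `8 ∣ n`
and `n/2` otherwise, the 4-graph `H*` whose edges are the 4-sets meeting `A` in an odd
number of vertices has minimum codegree exactly `n/2 - 3` resp. `n/2 - 2`, and contains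
no Hamilton 2-cycle. -/
theorem statement2 (n : ℕ) (hn : 6 ≤ n) (hev : Even n) (A : Finset (Fin n))
    (hA : A.card = if 8 ∣ n then n / 2 - 1 else n / 2) :
    (∀ S : Finset (Fin n), S.card = 3 →
        (if 8 ∣ n then n / 2 - 3 else n / 2 - 2) ≤
          deg (oddEdges (Finset.powersetCard 4 (Finset.univ : Finset (Fin n))) A) S) ∧
    (∃ S : Finset (Fin n), S.card = 3 ∧
        deg (oddEdges (Finset.powersetCard 4 (Finset.univ : Finset (Fin n))) A) S =
          (if 8 ∣ n then n / 2 - 3 else n / 2 - 2)) ∧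
    ¬ HamCycle2 n (oddEdges (Finset.powersetCard 4 (Finset.univ : Finset (Fin n))) A) := by
  classical
  have h2 : 2 ∣ n := hev.two_dvd
  refine ⟨?_, ?_, no_ham hn hev A hA⟩
  · intro S hS
    rw [deg_odd_val A S hS]
    have hs3 : (S ∩ A).card ≤ 3 := hS ▸ Finset.card_le_card Finset.inter_subset_left
    have hsA : (S ∩ A).card ≤ A.card := Finset.card_le_card Finset.inter_subset_right
    have hA1 : (A \ S).card = A.card - (A ∩ S).card := by
      rw [← Finset.sdiff_inter_self_left, Finset.card_sdiff_of_subset Finset.inter_subset_left]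
    have hA2 : (Aᶜ \ S).card = Aᶜ.card - (Aᶜ ∩ S).card := by
      rw [← Finset.sdiff_inter_self_left, Finset.card_sdiff_of_subset Finset.inter_subset_left]
    have hcompl : Aᶜ.card = n - A.card := by rw [Finset.card_compl, Fintype.card_fin]
    have hAS : (A ∩ S).card = (S ∩ A).card := by rw [Finset.inter_comm]
    have hAcS : (Aᶜ ∩ S).card = 3 - (S ∩ A).card := by
      have h1 : (S ∩ A).card + (S \ A).card = S.card := Finset.card_inter_add_card_sdiff S A
      have h2' : S \ A = S ∩ Aᶜ := sdiff_eq
      rw [Finset.inter_comm, ← h2']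
      omega
    by_cases h8 : 8 ∣ n
    · rw [if_pos h8] at hA ⊢
      split_ifs with hodd
      · rw [hA2, hcompl, hAcS]
        rw [Nat.odd_iff] at hodd
        omega
      · rw [hA1, hAS]
        rw [Nat.odd_iff] at hodd
        omega
    · rw [if_neg h8] at hA ⊢
      split_ifs with hodd
      · rw [hA2, hcompl, hAcS]
        rw [Nat.odd_iff] at hodd
        omega
      · rw [hA1, hAS]
        rw [Nat.odd_iff] at hodd
        omega
  · have hA2 : 2 ≤ A.card := by split_ifs at hA with h8 <;> omega
    have hAc1 : 1 ≤ Aᶜ.card := by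
      rw [Finset.card_compl, Fintype.card_fin]
      split_ifs at hA with h8 <;> omega
    obtain ⟨P, hPA, hP2⟩ := Finset.exists_subset_card_eq (s := A) (n := 2) hA2
    obtain ⟨Q, hQA, hQ1⟩ := Finset.exists_subset_card_eq (s := Aᶜ) (n := 1) hAc1
    have hdisj : Disjoint P Q := Finset.disjoint_left.mpr fun x hxP hxQ =>
      (Finset.mem_compl.mp (hQA hxQ)) (hPA hxP)
    have hScard : (P ∪ Q).card = 3 := by
      rw [Finset.card_union_of_disjoint hdisj, hP2, hQ1]
    have hQAe : Q ∩ A = ∅ := by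
      ext x
      simp only [Finset.mem_inter, Finset.notMem_empty, iff_false, not_and]
      intro hxQ hxA
      exact (Finset.mem_compl.mp (hQA hxQ)) hxA
    have hSA : (P ∪ Q) ∩ A = P := by
      rw [Finset.union_inter_distrib_right, Finset.inter_eq_left.mpr hPA, hQAe,
        Finset.union_empty]
    refine ⟨P ∪ Q, hScard, ?_⟩
    rw [deg_odd_val A (P ∪ Q) hScard, hSA, hP2, if_neg (by decide)]
    have hAS : A \ (P ∪ Q) = A \ P := by
      ext x
      simp only [Finset.mem_sdiff, Finset.mem_union, not_or]
      constructor
      · rintro ⟨hxA, hx, -⟩; exact ⟨hxA, hx⟩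
      · rintro ⟨hxA, hxP⟩
        exact ⟨hxA, hxP, fun h => (Finset.mem_compl.mp (hQA h)) hxA⟩
    rw [hAS, Finset.card_sdiff_of_subset hPA, hP2]
    split_ifs at hA ⊢ with h8 <;> omega
end

section
/- Suppose 1/n ≪ β ≪ μ ≪ 1 (nested-quantifier reading). Let H be a 4-graph on n vertices. Then: (i) every β-fine vertex of H is contained in at least (1−β)n β-fine pairs; (ii) every β-fine vertex of H is contained in at least (1−β)·C(n,2) β-fine triples; (iii) every β-fine pair of H is contained in at least (1−β)n β-fine triples. Moreover, if R ⊆ V(H) satisfies |R| ≤ (1−μ)n, then: (iv) for any two disjoint β-fine pairs p and p' there exists a pair p'' of vertices of V(H) ∖ R, disjoint from p ∪ p', such that p ∪ p'' ∈ E(H) and p' ∪ p'' ∈ E(H); and (v) if every vertex of H is β-fine, then for any β-fine pair p there exists a β-fine pair p'' of vertices of V(H) ∖ R, disjoint from p, such that p ∪ p'' ∈ E(H). -/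
open Finset

open HamiltonTwoCycles

namespace HamiltonTwoCycles

variable {n : ℕ} {E : Finset (Finset (Fin n))}

lemma deg_sum_swap {ι : Type*} [DecidableEq ι] (E : Finset (Finset (Fin n)))
    (U : Finset ι) (t : ι → Finset (Fin n)) :
    ∑ x ∈ U, deg E (t x) = ∑ e ∈ E, (U.filter fun x => t x ⊆ e).card := by
  unfold deg
  simp_rw [Finset.card_filter]
  exact Finset.sum_comm

lemma deg_le_of_card (h4 : Is4Graph E) {S : Finset (Fin n)} (_hS : S.card ≤ 4) :
    deg E S ≤ (n - S.card).choose (4 - S.card) := by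
  classical
  have hcard : ((Finset.univ \ S).powersetCard (4 - S.card)).card
      = (n - S.card).choose (4 - S.card) := by
    rw [Finset.card_powersetCard, Finset.card_sdiff_of_subset (Finset.subset_univ S),
      Finset.card_univ, Fintype.card_fin]
  rw [← hcard]
  apply Finset.card_le_card_of_injOn (fun e => e \ S)
  · intro e he
    rw [Finset.mem_coe, Finset.mem_filter] at he
    rw [Finset.mem_coe, Finset.mem_powersetCard]
    refine ⟨Finset.sdiff_subset_sdiff (Finset.subset_univ e) le_rfl, ?_⟩
    rw [Finset.card_sdiff_of_subset he.2, h4 e he.1]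
  · intro e he e' he' h
    rw [Finset.mem_coe, Finset.mem_filter] at he he'
    simp only [] at h
    have : S ∪ e \ S = S ∪ e' \ S := by rw [h]
    rwa [Finset.union_sdiff_of_subset he.2, Finset.union_sdiff_of_subset he'.2] at this

lemma card_goodpairs (h4 : Is4Graph E) {p : Finset (Fin n)} (hp : p.card = 2) :
    (((Finset.univ \ p).powersetCard 2).filter fun q => p ∪ q ∈ E).card = deg E p := by
  classical
  unfold deg
  apply Finset.card_bij (fun q _ => p ∪ q)
  · intro q hq
    rw [Finset.mem_filter] at hq ⊢
    exact ⟨hq.2, Finset.subset_union_left⟩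
  · intro q hq q' hq' h
    rw [Finset.mem_filter, Finset.mem_powersetCard, Finset.subset_sdiff] at hq hq'
    have := congrArg (· \ p) h
    simpa [Finset.union_sdiff_cancel_left hq.1.1.2.symm,
      Finset.union_sdiff_cancel_left hq'.1.1.2.symm] using this
  · intro e he
    rw [Finset.mem_filter] at he
    refine ⟨e \ p, ?_, (Finset.union_sdiff_of_subset he.2)⟩
    rw [Finset.mem_filter, Finset.mem_powersetCard]
    refine ⟨⟨Finset.sdiff_subset_sdiff (Finset.subset_univ e) le_rfl, ?_⟩, ?_⟩
    · rw [Finset.card_sdiff_of_subset he.2, h4 e he.1, hp]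
    · rw [Finset.union_sdiff_of_subset he.2]; exact he.1

lemma handshakeA (h4 : Is4Graph E) (v : Fin n) :
    ∑ u ∈ Finset.univ.erase v, deg E {v, u} = 3 * deg E {v} := by
  classical
  rw [deg_sum_swap]
  have key : ∀ e ∈ E, ((Finset.univ.erase v).filter
      fun u => ({v, u} : Finset (Fin n)) ⊆ e).card = if v ∈ e then 3 else 0 := by
    intro e he
    by_cases hv : v ∈ e
    · rw [if_pos hv]
      have : ((Finset.univ.erase v).filter fun u => ({v, u} : Finset (Fin n)) ⊆ e)
          = e.erase v := by
        ext u
        simp [Finset.insert_subset_iff, hv, and_comm]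
      rw [this, Finset.card_erase_of_mem hv, h4 e he]
    · rw [if_neg hv]
      rw [Finset.card_eq_zero, Finset.filter_eq_empty_iff]
      intro u _ hsub
      exact hv (hsub (by simp))
  rw [Finset.sum_congr rfl key, Finset.sum_ite, Finset.sum_const, Finset.sum_const]
  have : deg E {v} = (E.filter fun e => v ∈ e).card := by
    unfold deg; congr 1; ext e; simp
  rw [this]
  simp [mul_comm]

lemma handshakeB (h4 : Is4Graph E) (v : Fin n) :
    ∑ q ∈ (Finset.univ.erase v).powersetCard 2, deg E (insert v q) = 3 * deg E {v} := by
  classical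
  rw [deg_sum_swap]
  have key : ∀ e ∈ E, (((Finset.univ.erase v).powersetCard 2).filter
      fun q => insert v q ⊆ e).card = if v ∈ e then 3 else 0 := by
    intro e he
    by_cases hv : v ∈ e
    · rw [if_pos hv]
      have : (((Finset.univ.erase v).powersetCard 2).filter fun q => insert v q ⊆ e)
          = (e.erase v).powersetCard 2 := by
        ext q
        simp only [Finset.mem_filter, Finset.mem_powersetCard, Finset.insert_subset_iff,
          Finset.subset_erase, Finset.subset_univ, true_and]
        constructor
        · rintro ⟨⟨hvq, hq2⟩, _, hqe⟩
          exact ⟨⟨hqe, hvq⟩, hq2⟩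
        · rintro ⟨⟨hqe, hvq⟩, hq2⟩
          exact ⟨⟨hvq, hq2⟩, hv, hqe⟩
      rw [this, Finset.card_powersetCard, Finset.card_erase_of_mem hv, h4 e he]; rfl
    · rw [if_neg hv]
      rw [Finset.card_eq_zero, Finset.filter_eq_empty_iff]
      intro q _ hsub
      exact hv (hsub (Finset.mem_insert_self v q))
  rw [Finset.sum_congr rfl key, Finset.sum_ite, Finset.sum_const, Finset.sum_const]
  have : deg E {v} = (E.filter fun e => v ∈ e).card := by
    unfold deg; congr 1; ext e; simp
  rw [this]
  simp [mul_comm]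

lemma handshakeC (h4 : Is4Graph E) {p : Finset (Fin n)} (hp : p.card = 2) :
    ∑ u ∈ Finset.univ \ p, deg E (insert u p) = 2 * deg E p := by
  classical
  rw [deg_sum_swap]
  have key : ∀ e ∈ E, ((Finset.univ \ p).filter
      fun u => insert u p ⊆ e).card = if p ⊆ e then 2 else 0 := by
    intro e he
    by_cases hpe : p ⊆ e
    · rw [if_pos hpe]
      have : ((Finset.univ \ p).filter fun u => insert u p ⊆ e) = e \ p := by
        ext u
        simp only [Finset.mem_filter, Finset.mem_sdiff, Finset.mem_univ, true_and,
          Finset.insert_subset_iff]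
        constructor
        · rintro ⟨hup, hue, _⟩; exact ⟨hue, hup⟩
        · rintro ⟨hue, hup⟩; exact ⟨hup, hue, hpe⟩
      rw [this, Finset.card_sdiff_of_subset hpe, h4 e he, hp]
    · rw [if_neg hpe]
      rw [Finset.card_eq_zero, Finset.filter_eq_empty_iff]
      intro u _ hsub
      exact hpe ((Finset.subset_insert u p).trans hsub)
  rw [Finset.sum_congr rfl key, Finset.sum_ite, Finset.sum_const, Finset.sum_const]
  unfold deg
  simp [mul_comm]

lemma handshakeD (h4 : Is4Graph E) :
    ∑ q ∈ Finset.univ.powersetCard 2, deg E q = 6 * E.card := by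
  classical
  rw [deg_sum_swap E _ (fun q => q)]
  have key : ∀ e ∈ E, ((Finset.univ.powersetCard 2).filter fun q => q ⊆ e).card = 6 := by
    intro e he
    have : ((Finset.univ.powersetCard 2).filter fun q => q ⊆ e) = e.powersetCard 2 := by
      ext q
      simp only [Finset.mem_filter, Finset.mem_powersetCard, Finset.subset_univ, true_and]
      tauto
    rw [this, Finset.card_powersetCard, h4 e he]; rfl
  rw [Finset.sum_congr rfl key, Finset.sum_const]
  simp [mul_comm]

lemma handshakeE (h4 : Is4Graph E) :
    ∑ v : Fin n, deg E {v} = 4 * E.card := by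
  classical
  rw [deg_sum_swap E _ (fun v => {v})]
  have key : ∀ e ∈ E, (Finset.univ.filter fun v => ({v} : Finset (Fin n)) ⊆ e).card = 4 := by
    intro e he
    have : (Finset.univ.filter fun v => ({v} : Finset (Fin n)) ⊆ e) = e := by
      ext v; simp
    rw [this, h4 e he]
  rw [Finset.sum_congr rfl key, Finset.sum_const]
  simp [mul_comm]

lemma count_good {α : Type*} [DecidableEq α] (U G : Finset α) (g : α → ℕ) (T D : ℝ)
    (hG : G ⊆ U) (hbad : ∀ x ∈ U, x ∉ G → (g x : ℝ) ≤ T)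
    (hD : ∀ x ∈ U, (g x : ℝ) ≤ D) :
    (∑ x ∈ U, (g x : ℝ)) - (U.card : ℝ) * T ≤ (G.card : ℝ) * (D - T) := by
  have hsplit : ∑ x ∈ U, (g x : ℝ) = (∑ x ∈ U \ G, (g x : ℝ)) + ∑ x ∈ G, (g x : ℝ) :=
    (Finset.sum_sdiff hG).symm
  have h1 : ∑ x ∈ U \ G, (g x : ℝ) ≤ ((U \ G).card : ℝ) * T := by
    calc ∑ x ∈ U \ G, (g x : ℝ) ≤ (U \ G).card • T :=
          Finset.sum_le_card_nsmul _ _ _ (fun x hx => by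
            rw [Finset.mem_sdiff] at hx; exact hbad x hx.1 hx.2)
      _ = ((U \ G).card : ℝ) * T := by rw [nsmul_eq_mul]
  have h2 : ∑ x ∈ G, (g x : ℝ) ≤ (G.card : ℝ) * D := by
    calc ∑ x ∈ G, (g x : ℝ) ≤ G.card • D :=
          Finset.sum_le_card_nsmul _ _ _ (fun x hx => hD x (hG hx))
      _ = (G.card : ℝ) * D := by rw [nsmul_eq_mul]
  have hc : ((U \ G).card : ℝ) = (U.card : ℝ) - (G.card : ℝ) := by
    rw [Finset.card_sdiff_of_subset hG]
    have := Finset.card_le_card hG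
    push_cast [Nat.cast_sub this]
    ring
  rw [hsplit]
  rw [hc] at h1
  nlinarith [h1, h2]

lemma count_bad {α : Type*} [DecidableEq α] (U B : Finset α) (g : α → ℕ) (T D : ℝ)
    (hB : B ⊆ U) (hbad : ∀ x ∈ B, (g x : ℝ) ≤ T)
    (hD : ∀ x ∈ U, (g x : ℝ) ≤ D) :
    (B.card : ℝ) * (D - T) ≤ (U.card : ℝ) * D - ∑ x ∈ U, (g x : ℝ) := by
  have hsplit : ∑ x ∈ U, (g x : ℝ) = (∑ x ∈ U \ B, (g x : ℝ)) + ∑ x ∈ B, (g x : ℝ) :=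
    (Finset.sum_sdiff hB).symm
  have h1 : ∑ x ∈ U \ B, (g x : ℝ) ≤ ((U \ B).card : ℝ) * D := by
    calc ∑ x ∈ U \ B, (g x : ℝ) ≤ (U \ B).card • D :=
          Finset.sum_le_card_nsmul _ _ _ (fun x hx => hD x (Finset.mem_sdiff.mp hx).1)
      _ = _ := by rw [nsmul_eq_mul]
  have h2 : ∑ x ∈ B, (g x : ℝ) ≤ (B.card : ℝ) * T := by
    calc ∑ x ∈ B, (g x : ℝ) ≤ B.card • T := Finset.sum_le_card_nsmul _ _ _ hbad
      _ = _ := by rw [nsmul_eq_mul]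
  have hc : ((U \ B).card : ℝ) = (U.card : ℝ) - (B.card : ℝ) := by
    rw [Finset.card_sdiff_of_subset hB]
    have := Finset.card_le_card hB
    push_cast [Nat.cast_sub this]
    ring
  rw [hsplit]
  rw [hc] at h1
  nlinarith [h1, h2]

lemma card_le_natCard {α : Type*} [Fintype α] (P : α → Prop) (G : Finset α)
    (hG : ∀ x ∈ G, P x) : (G.card : ℝ) ≤ (Nat.card {x // P x} : ℝ) := by
  classical
  have : Nat.card {x // P x} = (Finset.univ.filter P).card := by
    rw [Nat.card_eq_fintype_card, Fintype.card_subtype]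
  rw [this]
  exact_mod_cast Finset.card_le_card fun x hx =>
    Finset.mem_filter.mpr ⟨Finset.mem_univ x, hG x hx⟩

lemma realChoose2 {m : ℕ} (h : 1 ≤ m) : ((m.choose 2 : ℕ) : ℝ) = m * (m - 1) / 2 := by
  have key := Nat.choose_succ_right_eq m 1
  rw [Nat.choose_one_right] at key
  have hcast : ((m.choose 2 : ℕ) : ℝ) * 2 = (m : ℝ) * ((m : ℝ) - 1) := by
    have h1 : ((m - 1 : ℕ) : ℝ) = (m : ℝ) - 1 := by
      rw [Nat.cast_sub h]; norm_num
    calc ((m.choose 2 : ℕ) : ℝ) * 2 = ((m.choose 2 * 2 : ℕ) : ℝ) := by push_cast; ring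
      _ = ((m * (m - 1) : ℕ) : ℝ) := by rw [key]
      _ = (m : ℝ) * ((m : ℝ) - 1) := by rw [Nat.cast_mul, h1]
  linarith

lemma realChoose3 {m : ℕ} (h : 2 ≤ m) :
    ((m.choose 3 : ℕ) : ℝ) = m * (m - 1) * (m - 2) / 6 := by
  have key := Nat.choose_succ_right_eq m 2
  have hcast : ((m.choose 3 : ℕ) : ℝ) * 3 = ((m.choose 2 : ℕ) : ℝ) * ((m : ℝ) - 2) := by
    have h1 : ((m - 2 : ℕ) : ℝ) = (m : ℝ) - 2 := by
      rw [Nat.cast_sub h]; norm_num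
    calc ((m.choose 3 : ℕ) : ℝ) * 3 = ((m.choose 3 * 3 : ℕ) : ℝ) := by push_cast; ring
      _ = ((m.choose 2 * (m - 2) : ℕ) : ℝ) := by rw [key]
      _ = _ := by rw [Nat.cast_mul, h1]
  rw [realChoose2 (by omega)] at hcast
  linarith

end HamiltonTwoCycles

namespace HamiltonTwoCycles

lemma quadLow4 {x m : ℝ} (hc : x - 4 ≤ m) (hx : 5 ≤ x) (hm1 : 1 ≤ m) :
    (x-4)*(x-5)/2 ≤ m*(m-1)/2 := by
  nlinarith [mul_nonneg (sub_nonneg.mpr hc) (show (0:ℝ) ≤ m - 1 by linarith),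
    mul_nonneg (show (0:ℝ) ≤ x - 5 by linarith) (sub_nonneg.mpr hc)]

lemma quadLow2 {x m : ℝ} (hc : x - 2 ≤ m) (hx : 3 ≤ x) (hm1 : 1 ≤ m) :
    (x-2)*(x-3)/2 ≤ m*(m-1)/2 := by
  nlinarith [mul_nonneg (sub_nonneg.mpr hc) (show (0:ℝ) ≤ m - 1 by linarith),
    mul_nonneg (show (0:ℝ) ≤ x - 3 by linarith) (sub_nonneg.mpr hc)]

lemma numericUB {β N : ℝ} (hβ0 : 0 ≤ β) (hN : 100 ≤ N) :
    (N*(N-1)/2) * ((N-2)*(N-3)/2) - (3/2) * (N * ((1-β^3)*(N*(N-1)*(N-2)/6)))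
      ≤ β^3*N^4/4 := by
  have h1 : (0:ℝ) ≤ N*(N-1)*(N-2) :=
    mul_nonneg (mul_nonneg (by linarith) (by linarith)) (by linarith)
  have h2 : (0:ℝ) ≤ β^3*(N*N*(3*N-2)) :=
    mul_nonneg (pow_nonneg hβ0 3)
      (mul_nonneg (mul_nonneg (by linarith) (by linarith)) (by linarith))
  nlinarith [h1, h2]

lemma numericDT {β N : ℝ} (hβ2N : 100 ≤ β^2*N) (hβsq1 : β^2 ≤ 1) (hN0 : 0 ≤ N) :
    β^2*N*N/4 ≤ (N-2)*(N-3)/2 - (1-β^2)*(N*(N-1)/2) := by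
  have h1 : (0:ℝ) ≤ (β^2*N - 100)*N := mul_nonneg (by linarith) hN0
  have h2 : (0:ℝ) ≤ (1 - β^2)*N := mul_nonneg (by linarith) hN0
  nlinarith [h1, h2]

lemma numeric4 {β μ N Qc Bc Bc' : ℝ} (hx : 10000 ≤ μ*N)
    (hb2 : β^2 ≤ μ^2/10000) (hN0 : 0 ≤ N) (hβ2N0 : 0 ≤ β^2*N)
    (hQlow : (μ*N-4)*(μ*N-5)/2 ≤ Qc)
    (hB : Bc ≤ β^2*(N*(N-1)/2)) (hB' : Bc' ≤ β^2*(N*(N-1)/2))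
    (hle : Qc ≤ Bc + Bc') : False := by
  have h1 : Qc ≤ β^2*(N*N) := by nlinarith
  have h2 : β^2*(N*N) ≤ (μ*N)*(μ*N)/10000 := by
    nlinarith [mul_nonneg (show (0:ℝ) ≤ μ^2/10000 - β^2 by linarith)
      (mul_nonneg hN0 hN0)]
  have hxx : 10000*(μ*N) ≤ (μ*N)*(μ*N) := by
    nlinarith [mul_nonneg (show (0:ℝ) ≤ μ*N - 10000 by linarith)
      (show (0:ℝ) ≤ μ*N by linarith)]
  linarith

lemma numeric5 {β μ N Qc Bc Fc : ℝ} (hx : 10000 ≤ μ*N)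
    (hb1 : 100*β ≤ μ^2) (hb2 : β^2 ≤ μ^2/10000) (hN0 : 0 ≤ N) (hβ2N0 : 0 ≤ β^2*N)
    (hQlow : (μ*N-2)*(μ*N-3)/2 ≤ Qc)
    (hB : Bc ≤ β^2*(N*(N-1)/2)) (hF : Fc ≤ β*N*N)
    (hle : Qc ≤ Bc + Fc) : False := by
  have h2 : β^2*(N*N) ≤ (μ*N)*(μ*N)/10000 := by
    nlinarith [mul_nonneg (show (0:ℝ) ≤ μ^2/10000 - β^2 by linarith)
      (mul_nonneg hN0 hN0)]
  have h3 : β*(N*N) ≤ (μ*N)*(μ*N)/100 := by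
    nlinarith [mul_nonneg (show (0:ℝ) ≤ μ^2/100 - β by linarith)
      (mul_nonneg hN0 hN0)]
  have hxx : 10000*(μ*N) ≤ (μ*N)*(μ*N) := by
    nlinarith [mul_nonneg (show (0:ℝ) ≤ μ*N - 10000 by linarith)
      (show (0:ℝ) ≤ μ*N by linarith)]
  nlinarith

set_option maxHeartbeats 1000000 in
lemma partI {n : ℕ} {E : Finset (Finset (Fin n))} (h4 : Is4Graph E) {β : ℝ}
    (hβ0 : 0 < β) (hβ100 : β ≤ 1/100) (hn4 : 4 ≤ n) (hβ5N : 100 ≤ β^5*(n:ℝ)) :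
    ∀ v : Fin n, FineVertex n E β v →
      (1 - β) * (n : ℝ) ≤
        (Nat.card {p : Finset (Fin n) // v ∈ p ∧ FinePair n E β p} : ℝ) := by
  classical
  set N : ℝ := (n : ℝ) with hNdef
  have hN0 : (0:ℝ) ≤ N := Nat.cast_nonneg n
  have hβ1 : β ≤ 1 := by linarith
  have hβsq1 : β^2 ≤ 1 := pow_le_one₀ hβ0.le hβ1
  have hβcu1 : β^3 ≤ 1 := pow_le_one₀ hβ0.le hβ1
  have hβ4 : β^4 ≤ 1 := pow_le_one₀ hβ0.le hβ1
  have hβ5 : β^5 ≤ 1 := pow_le_one₀ hβ0.le hβ1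
  have hN100 : 100 ≤ N := le_trans hβ5N (by nlinarith)
  have hβN : 100 ≤ β * N := le_trans hβ5N (by
    nlinarith [mul_nonneg (show (0:ℝ) ≤ β - β^5 by nlinarith [pow_nonneg hβ0.le 4]) hN0])
  have hβ2N : 100 ≤ β^2 * N := le_trans hβ5N (by
    nlinarith [mul_nonneg (show (0:ℝ) ≤ β^2 - β^5 by nlinarith [pow_nonneg hβ0.le 2]) hN0])
  have hβ3N : 100 ≤ β^3 * N := le_trans hβ5N (by
    nlinarith [mul_nonneg (show (0:ℝ) ≤ β^3 - β^5 by nlinarith [pow_nonneg hβ0.le 3]) hN0])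
  have hc1 : ((n-1 : ℕ) : ℝ) = N - 1 := by rw [Nat.cast_sub (by omega)]; norm_num [hNdef]
  have hc2 : ((n-2 : ℕ) : ℝ) = N - 2 := by rw [Nat.cast_sub (by omega)]; norm_num [hNdef]
  have hc3 : ((n-3 : ℕ) : ℝ) = N - 3 := by rw [Nat.cast_sub (by omega)]; norm_num [hNdef]
  have hC2 : ((n.choose 2 : ℕ) : ℝ) = N * (N-1) / 2 := realChoose2 (by omega)
  have hC3 : ((n.choose 3 : ℕ) : ℝ) = N * (N-1) * (N-2) / 6 := realChoose3 (by omega)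
  have hD2 : (((n-2).choose 2 : ℕ) : ℝ) = (N-2) * (N-3) / 2 := by
    rw [realChoose2 (show 1 ≤ n-2 by omega), hc2]; ring
  have hCn1 : (((n-1).choose 2 : ℕ) : ℝ) = (N-1) * (N-2) / 2 := by
    rw [realChoose2 (show 1 ≤ n-1 by omega), hc1]; ring
  have hdegpair : ∀ S : Finset (Fin n), S.card = 2 → (deg E S : ℝ) ≤ (N-2)*(N-3)/2 := by
    intro S hS
    have h := deg_le_of_card h4 (S := S) (by omega)
    rw [hS] at h
    calc (deg E S : ℝ) ≤ (((n-2).choose 2 : ℕ) : ℝ) := Nat.cast_le.mpr h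
      _ = _ := hD2
  have hdegtriple : ∀ S : Finset (Fin n), S.card = 3 → (deg E S : ℝ) ≤ N - 3 := by
    intro S hS
    have h := deg_le_of_card h4 (S := S) (by omega)
    rw [hS, Nat.choose_one_right] at h
    calc (deg E S : ℝ) ≤ ((n-3 : ℕ) : ℝ) := Nat.cast_le.mpr h
      _ = _ := hc3
  have hDT1 : (0:ℝ) < (N-2)*(N-3)/2 - (1-β^2)*(N*(N-1)/2) := by
    nlinarith [mul_nonneg (show (0:ℝ) ≤ β^2*N - β^2 - 4 by linarith) hN0]
  have hDT2 : (0:ℝ) < (N - 3) - (1-β)*N := by nlinarith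
  intro v hv
  have hv' : (1 - β^3) * ((n.choose 3 : ℕ) : ℝ) ≤ (deg E {v} : ℝ) := hv
  set U : Finset (Finset (Fin n)) :=
    (Finset.univ.erase v).image (fun u => {v, u}) with hU
  have hinj : ∀ x ∈ Finset.univ.erase v, ∀ y ∈ Finset.univ.erase v,
      ({v, x} : Finset (Fin n)) = {v, y} → x = y := by
    intro x hx y hy h
    have hxv : x ≠ v := Finset.ne_of_mem_erase hx
    have hmem : x ∈ ({v, y} : Finset (Fin n)) := h ▸ (by simp)
    simp only [Finset.mem_insert, Finset.mem_singleton] at hmem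
    tauto
  have hUcard : U.card = n - 1 := by
    rw [hU, Finset.card_image_of_injOn hinj,
      Finset.card_erase_of_mem (Finset.mem_univ v), Finset.card_univ, Fintype.card_fin]
  have hUsum : ∑ x ∈ U, deg E x = 3 * deg E {v} := by
    rw [hU, Finset.sum_image hinj]
    exact handshakeA h4 v
  have hUelt : ∀ x ∈ U, v ∈ x ∧ x.card = 2 := by
    intro x hx
    rw [hU, Finset.mem_image] at hx
    obtain ⟨u, hu, rfl⟩ := hx
    have huv : u ≠ v := Finset.ne_of_mem_erase hu
    exact ⟨by simp, Finset.card_pair (Ne.symm huv)⟩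
  set G : Finset (Finset (Fin n)) :=
    U.filter (fun x => (1 - β^2) * ((n.choose 2 : ℕ) : ℝ) ≤ (deg E x : ℝ)) with hG
  have hbad : ∀ x ∈ U, x ∉ G → (deg E x : ℝ) ≤ (1-β^2)*(N*(N-1)/2) := by
    intro x hxU hxG
    rw [hG, Finset.mem_filter] at hxG
    push_neg at hxG
    rw [← hC2]
    exact (hxG hxU).le
  have hDb : ∀ x ∈ U, (deg E x : ℝ) ≤ (N-2)*(N-3)/2 :=
    fun x hx => hdegpair x (hUelt x hx).2
  have hcg := count_good U G (deg E) ((1-β^2)*(N*(N-1)/2)) ((N-2)*(N-3)/2)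
    (Finset.filter_subset _ _) hbad hDb
  have hsr : ∑ x ∈ U, ((deg E x : ℕ) : ℝ) = 3 * ((deg E {v} : ℕ) : ℝ) := by
    exact_mod_cast congrArg (Nat.cast : ℕ → ℝ) hUsum
  have hUc : (U.card : ℝ) = N - 1 := by rw [hUcard]; exact hc1
  rw [hsr, hUc] at hcg
  have hP1 : (0:ℝ) ≤ 3*N - 4*β*N + 2*β^3*N - β^2*N - 5 + 6*β - 2*β^3 + β^2 := by
    nlinarith [mul_nonneg hN0 (show (0:ℝ) ≤ 3 - 4*β - β^2 + 2*β^3 - 1 by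
      nlinarith [pow_nonneg hβ0.le 3]), pow_nonneg hβ0.le 3, pow_nonneg hβ0.le 2]
  have hkey : (1-β)*N*((N-2)*(N-3)/2 - (1-β^2)*(N*(N-1)/2)) ≤
      3*((1-β^3)*(N*(N-1)*(N-2)/6)) - (N-1)*((1-β^2)*(N*(N-1)/2)) := by
    nlinarith [mul_nonneg hN0 hP1]
  have hlow : (1-β^3)*(N*(N-1)*(N-2)/6) ≤ (deg E {v} : ℝ) := by
    rw [← hC3]; exact hv'
  have hfinal : (1-β)*N ≤ (G.card : ℝ) := by
    have h1 : (1-β)*N*((N-2)*(N-3)/2 - (1-β^2)*(N*(N-1)/2)) ≤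
        (G.card : ℝ)*((N-2)*(N-3)/2 - (1-β^2)*(N*(N-1)/2)) := by
      calc (1-β)*N*((N-2)*(N-3)/2 - (1-β^2)*(N*(N-1)/2))
          ≤ 3*((1-β^3)*(N*(N-1)*(N-2)/6)) - (N-1)*((1-β^2)*(N*(N-1)/2)) := hkey
        _ ≤ 3*((deg E {v} : ℕ) : ℝ) - (N-1)*((1-β^2)*(N*(N-1)/2)) := by linarith
        _ ≤ (G.card : ℝ)*((N-2)*(N-3)/2 - (1-β^2)*(N*(N-1)/2)) := by linarith
    exact le_of_mul_le_mul_right h1 hDT1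
  calc (1-β)*N ≤ (G.card : ℝ) := hfinal
    _ ≤ _ := by
        apply card_le_natCard
        intro x hx
        rw [hG, Finset.mem_filter] at hx
        exact ⟨(hUelt x hx.1).1, (hUelt x hx.1).2, hx.2⟩


set_option maxHeartbeats 1000000 in
lemma partII {n : ℕ} {E : Finset (Finset (Fin n))} (h4 : Is4Graph E) {β : ℝ}
    (hβ0 : 0 < β) (hβ100 : β ≤ 1/100) (hn4 : 4 ≤ n) (hβ5N : 100 ≤ β^5*(n:ℝ)) :
    ∀ v : Fin n, FineVertex n E β v →
      (1 - β) * (n.choose 2 : ℝ) ≤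
        (Nat.card {S : Finset (Fin n) // v ∈ S ∧ FineTriple n E β S} : ℝ) := by
  classical
  set N : ℝ := (n : ℝ) with hNdef
  have hN0 : (0:ℝ) ≤ N := Nat.cast_nonneg n
  have hβ1 : β ≤ 1 := by linarith
  have hβsq1 : β^2 ≤ 1 := pow_le_one₀ hβ0.le hβ1
  have hβcu1 : β^3 ≤ 1 := pow_le_one₀ hβ0.le hβ1
  have hβ4 : β^4 ≤ 1 := pow_le_one₀ hβ0.le hβ1
  have hβ5 : β^5 ≤ 1 := pow_le_one₀ hβ0.le hβ1
  have hN100 : 100 ≤ N := le_trans hβ5N (by nlinarith)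
  have hβN : 100 ≤ β * N := le_trans hβ5N (by
    nlinarith [mul_nonneg (show (0:ℝ) ≤ β - β^5 by nlinarith [pow_nonneg hβ0.le 4]) hN0])
  have hβ2N : 100 ≤ β^2 * N := le_trans hβ5N (by
    nlinarith [mul_nonneg (show (0:ℝ) ≤ β^2 - β^5 by nlinarith [pow_nonneg hβ0.le 2]) hN0])
  have hβ3N : 100 ≤ β^3 * N := le_trans hβ5N (by
    nlinarith [mul_nonneg (show (0:ℝ) ≤ β^3 - β^5 by nlinarith [pow_nonneg hβ0.le 3]) hN0])
  have hc1 : ((n-1 : ℕ) : ℝ) = N - 1 := by rw [Nat.cast_sub (by omega)]; norm_num [hNdef]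
  have hc2 : ((n-2 : ℕ) : ℝ) = N - 2 := by rw [Nat.cast_sub (by omega)]; norm_num [hNdef]
  have hc3 : ((n-3 : ℕ) : ℝ) = N - 3 := by rw [Nat.cast_sub (by omega)]; norm_num [hNdef]
  have hC2 : ((n.choose 2 : ℕ) : ℝ) = N * (N-1) / 2 := realChoose2 (by omega)
  have hC3 : ((n.choose 3 : ℕ) : ℝ) = N * (N-1) * (N-2) / 6 := realChoose3 (by omega)
  have hD2 : (((n-2).choose 2 : ℕ) : ℝ) = (N-2) * (N-3) / 2 := by
    rw [realChoose2 (show 1 ≤ n-2 by omega), hc2]; ring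
  have hCn1 : (((n-1).choose 2 : ℕ) : ℝ) = (N-1) * (N-2) / 2 := by
    rw [realChoose2 (show 1 ≤ n-1 by omega), hc1]; ring
  have hdegpair : ∀ S : Finset (Fin n), S.card = 2 → (deg E S : ℝ) ≤ (N-2)*(N-3)/2 := by
    intro S hS
    have h := deg_le_of_card h4 (S := S) (by omega)
    rw [hS] at h
    calc (deg E S : ℝ) ≤ (((n-2).choose 2 : ℕ) : ℝ) := Nat.cast_le.mpr h
      _ = _ := hD2
  have hdegtriple : ∀ S : Finset (Fin n), S.card = 3 → (deg E S : ℝ) ≤ N - 3 := by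
    intro S hS
    have h := deg_le_of_card h4 (S := S) (by omega)
    rw [hS, Nat.choose_one_right] at h
    calc (deg E S : ℝ) ≤ ((n-3 : ℕ) : ℝ) := Nat.cast_le.mpr h
      _ = _ := hc3
  have hDT1 : (0:ℝ) < (N-2)*(N-3)/2 - (1-β^2)*(N*(N-1)/2) := by
    nlinarith [mul_nonneg (show (0:ℝ) ≤ β^2*N - β^2 - 4 by linarith) hN0]
  have hDT2 : (0:ℝ) < (N - 3) - (1-β)*N := by nlinarith
  intro v hv
  have hv' : (1 - β^3) * ((n.choose 3 : ℕ) : ℝ) ≤ (deg E {v} : ℝ) := hv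
  set U : Finset (Finset (Fin n)) :=
    ((Finset.univ.erase v).powersetCard 2).image (fun q => insert v q) with hU
  have hinj : ∀ x ∈ (Finset.univ.erase v).powersetCard 2,
      ∀ y ∈ (Finset.univ.erase v).powersetCard 2, insert v x = insert v y → x = y := by
    intro x hx y hy h
    rw [Finset.mem_powersetCard] at hx hy
    have hvx : v ∉ x := fun hvx => (Finset.mem_erase.mp (hx.1 hvx)).1 rfl
    have hvy : v ∉ y := fun hvy => (Finset.mem_erase.mp (hy.1 hvy)).1 rfl
    have h2 := congrArg (fun s => Finset.erase s v) h
    simpa [Finset.erase_insert hvx, Finset.erase_insert hvy] using h2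
  have hUcard : U.card = (n-1).choose 2 := by
    rw [hU, Finset.card_image_of_injOn hinj, Finset.card_powersetCard,
      Finset.card_erase_of_mem (Finset.mem_univ v), Finset.card_univ, Fintype.card_fin]
  have hUsum : ∑ x ∈ U, deg E x = 3 * deg E {v} := by
    rw [hU, Finset.sum_image hinj]
    exact handshakeB h4 v
  have hUelt : ∀ x ∈ U, v ∈ x ∧ x.card = 3 := by
    intro x hx
    rw [hU, Finset.mem_image] at hx
    obtain ⟨q, hq, rfl⟩ := hx
    rw [Finset.mem_powersetCard] at hq
    have hvq : v ∉ q := fun hv2 => (Finset.mem_erase.mp (hq.1 hv2)).1 rfl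
    exact ⟨Finset.mem_insert_self v q,
      by rw [Finset.card_insert_of_notMem hvq, hq.2]⟩
  set G : Finset (Finset (Fin n)) :=
    U.filter (fun x => (1 - β) * N ≤ (deg E x : ℝ)) with hG
  have hbad : ∀ x ∈ U, x ∉ G → (deg E x : ℝ) ≤ (1-β)*N := by
    intro x hxU hxG
    rw [hG, Finset.mem_filter] at hxG
    push_neg at hxG
    exact (hxG hxU).le
  have hDb : ∀ x ∈ U, (deg E x : ℝ) ≤ N - 3 :=
    fun x hx => hdegtriple x (hUelt x hx).2
  have hcg := count_good U G (deg E) ((1-β)*N) (N-3)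
    (Finset.filter_subset _ _) hbad hDb
  have hsr : ∑ x ∈ U, ((deg E x : ℕ) : ℝ) = 3 * ((deg E {v} : ℕ) : ℝ) := by
    exact_mod_cast congrArg (Nat.cast : ℕ → ℝ) hUsum
  have hUc : (U.card : ℝ) = (N-1)*(N-2)/2 := by rw [hUcard]; exact hCn1
  rw [hsr, hUc] at hcg
  have hP2 : (0:ℝ) ≤ β^2*N*(1-β) + 3 - 5*β + 2*β^3 := by
    nlinarith [mul_nonneg (mul_nonneg (pow_nonneg hβ0.le 2) hN0)
      (show (0:ℝ) ≤ 1 - β by linarith), pow_nonneg hβ0.le 3]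
  have hkey : (1-β)*(N*(N-1)/2)*((N-3) - (1-β)*N) ≤
      3*((1-β^3)*(N*(N-1)*(N-2)/6)) - ((N-1)*(N-2)/2)*((1-β)*N) := by
    nlinarith [mul_nonneg (mul_nonneg hN0 (show (0:ℝ) ≤ N-1 by linarith)) hP2]
  have hlow : (1-β^3)*(N*(N-1)*(N-2)/6) ≤ ((deg E {v} : ℕ) : ℝ) := by
    rw [← hC3]; exact hv'
  have hfinal : (1-β)*(N*(N-1)/2) ≤ (G.card : ℝ) := by
    have h1 : (1-β)*(N*(N-1)/2)*((N-3) - (1-β)*N) ≤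
        (G.card : ℝ)*((N-3) - (1-β)*N) := by
      calc (1-β)*(N*(N-1)/2)*((N-3) - (1-β)*N)
          ≤ 3*((1-β^3)*(N*(N-1)*(N-2)/6)) - ((N-1)*(N-2)/2)*((1-β)*N) := hkey
        _ ≤ 3*((deg E {v} : ℕ) : ℝ) - ((N-1)*(N-2)/2)*((1-β)*N) := by linarith
        _ ≤ (G.card : ℝ)*((N-3) - (1-β)*N) := by linarith
    exact le_of_mul_le_mul_right h1 hDT2
  calc (1-β) * ((n.choose 2 : ℕ) : ℝ) = (1-β)*(N*(N-1)/2) := by rw [hC2]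
    _ ≤ (G.card : ℝ) := hfinal
    _ ≤ _ := by
        apply card_le_natCard
        intro x hx
        rw [hG, Finset.mem_filter] at hx
        exact ⟨(hUelt x hx.1).1, (hUelt x hx.1).2, hx.2⟩


set_option maxHeartbeats 1000000 in
lemma partIII {n : ℕ} {E : Finset (Finset (Fin n))} (h4 : Is4Graph E) {β : ℝ}
    (hβ0 : 0 < β) (hβ100 : β ≤ 1/100) (hn4 : 4 ≤ n) (hβ5N : 100 ≤ β^5*(n:ℝ)) :
    ∀ p : Finset (Fin n), FinePair n E β p →
      (1 - β) * (n : ℝ) ≤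
        (Nat.card {S : Finset (Fin n) // p ⊆ S ∧ FineTriple n E β S} : ℝ) := by
  classical
  set N : ℝ := (n : ℝ) with hNdef
  have hN0 : (0:ℝ) ≤ N := Nat.cast_nonneg n
  have hβ1 : β ≤ 1 := by linarith
  have hβsq1 : β^2 ≤ 1 := pow_le_one₀ hβ0.le hβ1
  have hβcu1 : β^3 ≤ 1 := pow_le_one₀ hβ0.le hβ1
  have hβ4 : β^4 ≤ 1 := pow_le_one₀ hβ0.le hβ1
  have hβ5 : β^5 ≤ 1 := pow_le_one₀ hβ0.le hβ1
  have hN100 : 100 ≤ N := le_trans hβ5N (by nlinarith)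
  have hβN : 100 ≤ β * N := le_trans hβ5N (by
    nlinarith [mul_nonneg (show (0:ℝ) ≤ β - β^5 by nlinarith [pow_nonneg hβ0.le 4]) hN0])
  have hβ2N : 100 ≤ β^2 * N := le_trans hβ5N (by
    nlinarith [mul_nonneg (show (0:ℝ) ≤ β^2 - β^5 by nlinarith [pow_nonneg hβ0.le 2]) hN0])
  have hβ3N : 100 ≤ β^3 * N := le_trans hβ5N (by
    nlinarith [mul_nonneg (show (0:ℝ) ≤ β^3 - β^5 by nlinarith [pow_nonneg hβ0.le 3]) hN0])
  have hc1 : ((n-1 : ℕ) : ℝ) = N - 1 := by rw [Nat.cast_sub (by omega)]; norm_num [hNdef]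
  have hc2 : ((n-2 : ℕ) : ℝ) = N - 2 := by rw [Nat.cast_sub (by omega)]; norm_num [hNdef]
  have hc3 : ((n-3 : ℕ) : ℝ) = N - 3 := by rw [Nat.cast_sub (by omega)]; norm_num [hNdef]
  have hC2 : ((n.choose 2 : ℕ) : ℝ) = N * (N-1) / 2 := realChoose2 (by omega)
  have hC3 : ((n.choose 3 : ℕ) : ℝ) = N * (N-1) * (N-2) / 6 := realChoose3 (by omega)
  have hD2 : (((n-2).choose 2 : ℕ) : ℝ) = (N-2) * (N-3) / 2 := by
    rw [realChoose2 (show 1 ≤ n-2 by omega), hc2]; ring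
  have hCn1 : (((n-1).choose 2 : ℕ) : ℝ) = (N-1) * (N-2) / 2 := by
    rw [realChoose2 (show 1 ≤ n-1 by omega), hc1]; ring
  have hdegpair : ∀ S : Finset (Fin n), S.card = 2 → (deg E S : ℝ) ≤ (N-2)*(N-3)/2 := by
    intro S hS
    have h := deg_le_of_card h4 (S := S) (by omega)
    rw [hS] at h
    calc (deg E S : ℝ) ≤ (((n-2).choose 2 : ℕ) : ℝ) := Nat.cast_le.mpr h
      _ = _ := hD2
  have hdegtriple : ∀ S : Finset (Fin n), S.card = 3 → (deg E S : ℝ) ≤ N - 3 := by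
    intro S hS
    have h := deg_le_of_card h4 (S := S) (by omega)
    rw [hS, Nat.choose_one_right] at h
    calc (deg E S : ℝ) ≤ ((n-3 : ℕ) : ℝ) := Nat.cast_le.mpr h
      _ = _ := hc3
  have hDT1 : (0:ℝ) < (N-2)*(N-3)/2 - (1-β^2)*(N*(N-1)/2) := by
    nlinarith [mul_nonneg (show (0:ℝ) ≤ β^2*N - β^2 - 4 by linarith) hN0]
  have hDT2 : (0:ℝ) < (N - 3) - (1-β)*N := by nlinarith
  intro p hp
  have hp1 : p.card = 2 := hp.1
  have hp2 : (1 - β^2) * ((n.choose 2 : ℕ) : ℝ) ≤ (deg E p : ℝ) := hp.2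
  set U : Finset (Finset (Fin n)) :=
    (Finset.univ \ p).image (fun u => insert u p) with hU
  have hinj : ∀ x ∈ Finset.univ \ p, ∀ y ∈ Finset.univ \ p,
      insert x p = insert y p → x = y := by
    intro x hx y hy h
    have hxp : x ∉ p := (Finset.mem_sdiff.mp hx).2
    have hmem : x ∈ insert y p := h ▸ Finset.mem_insert_self x p
    rcases Finset.mem_insert.mp hmem with h1 | h1
    · exact h1
    · exact absurd h1 hxp
  have hUcard : U.card = n - 2 := by
    rw [hU, Finset.card_image_of_injOn hinj,
      Finset.card_sdiff_of_subset (Finset.subset_univ p), Finset.card_univ, Fintype.card_fin, hp1]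
  have hUsum : ∑ x ∈ U, deg E x = 2 * deg E p := by
    rw [hU, Finset.sum_image hinj]
    exact handshakeC h4 hp1
  have hUelt : ∀ x ∈ U, p ⊆ x ∧ x.card = 3 := by
    intro x hx
    rw [hU, Finset.mem_image] at hx
    obtain ⟨u, hu, rfl⟩ := hx
    have hup : u ∉ p := (Finset.mem_sdiff.mp hu).2
    exact ⟨Finset.subset_insert u p,
      by rw [Finset.card_insert_of_notMem hup, hp1]⟩
  set G : Finset (Finset (Fin n)) :=
    U.filter (fun x => (1 - β) * N ≤ (deg E x : ℝ)) with hG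
  have hbad : ∀ x ∈ U, x ∉ G → (deg E x : ℝ) ≤ (1-β)*N := by
    intro x hxU hxG
    rw [hG, Finset.mem_filter] at hxG
    push_neg at hxG
    exact (hxG hxU).le
  have hDb : ∀ x ∈ U, (deg E x : ℝ) ≤ N - 3 :=
    fun x hx => hdegtriple x (hUelt x hx).2
  have hcg := count_good U G (deg E) ((1-β)*N) (N-3)
    (Finset.filter_subset _ _) hbad hDb
  have hsr : ∑ x ∈ U, ((deg E x : ℕ) : ℝ) = 2 * ((deg E p : ℕ) : ℝ) := by
    exact_mod_cast congrArg (Nat.cast : ℕ → ℝ) hUsum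
  have hUc : (U.card : ℝ) = N - 2 := by rw [hUcard]; exact hc2
  rw [hsr, hUc] at hcg
  have hkey : (1-β)*N*((N-3) - (1-β)*N) ≤
      2*((1-β^2)*(N*(N-1)/2)) - (N-2)*((1-β)*N) := by
    nlinarith [mul_nonneg hN0
      (show (0:ℝ) ≤ (1-β)*(4-β) by nlinarith)]
  have hlow : (1-β^2)*(N*(N-1)/2) ≤ ((deg E p : ℕ) : ℝ) := by
    rw [← hC2]; exact hp2
  have hfinal : (1-β)*N ≤ (G.card : ℝ) := by
    have h1 : (1-β)*N*((N-3) - (1-β)*N) ≤ (G.card : ℝ)*((N-3) - (1-β)*N) := by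
      calc (1-β)*N*((N-3) - (1-β)*N)
          ≤ 2*((1-β^2)*(N*(N-1)/2)) - (N-2)*((1-β)*N) := hkey
        _ ≤ 2*((deg E p : ℕ) : ℝ) - (N-2)*((1-β)*N) := by linarith
        _ ≤ (G.card : ℝ)*((N-3) - (1-β)*N) := by linarith
    exact le_of_mul_le_mul_right h1 hDT2
  calc (1-β)*N ≤ (G.card : ℝ) := hfinal
    _ ≤ _ := by
        apply card_le_natCard
        intro x hx
        rw [hG, Finset.mem_filter] at hx
        exact ⟨(hUelt x hx.1).1, (hUelt x hx.1).2, hx.2⟩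


set_option maxHeartbeats 2000000 in
lemma partIV {n : ℕ} {E : Finset (Finset (Fin n))} (h4 : Is4Graph E) {β μ : ℝ}
    (hβ0 : 0 < β) (hβ100 : β ≤ 1/100) (hn4 : 4 ≤ n) (hβ5N : 100 ≤ β^5*(n:ℝ))
    (hμ0 : 0 < μ) (hμ1 : μ ≤ 1) (hβμ : 100*β ≤ μ^2) :
    ∀ R : Finset (Fin n), (R.card : ℝ) ≤ (1 - μ) * n →
      ((∀ p p' : Finset (Fin n), FinePair n E β p → FinePair n E β p' →
        Disjoint p p' →
        ∃ p'' : Finset (Fin n), p''.card = 2 ∧ Disjoint p'' R ∧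
          Disjoint p'' (p ∪ p') ∧ p ∪ p'' ∈ E ∧ p' ∪ p'' ∈ E) ∧
      ((∀ v : Fin n, FineVertex n E β v) →
        ∀ p : Finset (Fin n), FinePair n E β p →
          ∃ p'' : Finset (Fin n), FinePair n E β p'' ∧ Disjoint p'' R ∧
            Disjoint p'' p ∧ p ∪ p'' ∈ E)) := by
  classical
  set N : ℝ := (n : ℝ) with hNdef
  have hN0 : (0:ℝ) ≤ N := Nat.cast_nonneg n
  have hβ1 : β ≤ 1 := by linarith
  have hβsq1 : β^2 ≤ 1 := pow_le_one₀ hβ0.le hβ1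
  have hβcu1 : β^3 ≤ 1 := pow_le_one₀ hβ0.le hβ1
  have hβ4 : β^4 ≤ 1 := pow_le_one₀ hβ0.le hβ1
  have hβ5 : β^5 ≤ 1 := pow_le_one₀ hβ0.le hβ1
  have hN100 : 100 ≤ N := le_trans hβ5N (by nlinarith)
  have hβN : 100 ≤ β * N := le_trans hβ5N (by
    nlinarith [mul_nonneg (show (0:ℝ) ≤ β - β^5 by nlinarith [pow_nonneg hβ0.le 4]) hN0])
  have hβ2N : 100 ≤ β^2 * N := le_trans hβ5N (by
    nlinarith [mul_nonneg (show (0:ℝ) ≤ β^2 - β^5 by nlinarith [pow_nonneg hβ0.le 2]) hN0])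
  have hβ3N : 100 ≤ β^3 * N := le_trans hβ5N (by
    nlinarith [mul_nonneg (show (0:ℝ) ≤ β^3 - β^5 by nlinarith [pow_nonneg hβ0.le 3]) hN0])
  have hc1 : ((n-1 : ℕ) : ℝ) = N - 1 := by rw [Nat.cast_sub (by omega)]; norm_num [hNdef]
  have hc2 : ((n-2 : ℕ) : ℝ) = N - 2 := by rw [Nat.cast_sub (by omega)]; norm_num [hNdef]
  have hc3 : ((n-3 : ℕ) : ℝ) = N - 3 := by rw [Nat.cast_sub (by omega)]; norm_num [hNdef]
  have hC2 : ((n.choose 2 : ℕ) : ℝ) = N * (N-1) / 2 := realChoose2 (by omega)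
  have hC3 : ((n.choose 3 : ℕ) : ℝ) = N * (N-1) * (N-2) / 6 := realChoose3 (by omega)
  have hD2 : (((n-2).choose 2 : ℕ) : ℝ) = (N-2) * (N-3) / 2 := by
    rw [realChoose2 (show 1 ≤ n-2 by omega), hc2]; ring
  have hCn1 : (((n-1).choose 2 : ℕ) : ℝ) = (N-1) * (N-2) / 2 := by
    rw [realChoose2 (show 1 ≤ n-1 by omega), hc1]; ring
  have hdegpair : ∀ S : Finset (Fin n), S.card = 2 → (deg E S : ℝ) ≤ (N-2)*(N-3)/2 := by
    intro S hS
    have h := deg_le_of_card h4 (S := S) (by omega)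
    rw [hS] at h
    calc (deg E S : ℝ) ≤ (((n-2).choose 2 : ℕ) : ℝ) := Nat.cast_le.mpr h
      _ = _ := hD2
  have hdegtriple : ∀ S : Finset (Fin n), S.card = 3 → (deg E S : ℝ) ≤ N - 3 := by
    intro S hS
    have h := deg_le_of_card h4 (S := S) (by omega)
    rw [hS, Nat.choose_one_right] at h
    calc (deg E S : ℝ) ≤ ((n-3 : ℕ) : ℝ) := Nat.cast_le.mpr h
      _ = _ := hc3
  have hDT1 : (0:ℝ) < (N-2)*(N-3)/2 - (1-β^2)*(N*(N-1)/2) := by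
    nlinarith [mul_nonneg (show (0:ℝ) ≤ β^2*N - β^2 - 4 by linarith) hN0]
  have hDT2 : (0:ℝ) < (N - 3) - (1-β)*N := by nlinarith
  intro R hR
  have hμμ : μ^2 ≤ μ := by nlinarith
  have hμβ : 100*β ≤ μ := by linarith
  have hμN : 10000 ≤ μ*N := by
    nlinarith [mul_nonneg (show (0:ℝ) ≤ μ - 100*β by linarith) hN0, hβN]
  have hb2 : β^2 ≤ μ^2/10000 := by
    nlinarith [mul_le_mul hβ100 (show β ≤ μ^2/100 by linarith) hβ0.le
      (by norm_num : (0:ℝ) ≤ 1/100)]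
  -- bad pairs for a fine pair r
  have hBpair : ∀ r : Finset (Fin n), FinePair n E β r →
      (((((Finset.univ \ r).powersetCard 2)) \
        ((((Finset.univ \ r).powersetCard 2)).filter (fun q => r ∪ q ∈ E))).card : ℝ)
        ≤ β^2 * (N*(N-1)/2) := by
    intro r hr
    have hGr := card_goodpairs h4 hr.1
    have hDr : ((Finset.univ \ r).powersetCard 2).card = (n-2).choose 2 := by
      rw [Finset.card_powersetCard, Finset.card_sdiff_of_subset (Finset.subset_univ r),
        Finset.card_univ, Fintype.card_fin, hr.1]
    have hle : deg E r ≤ (n-2).choose 2 := by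
      have h := deg_le_of_card h4 (S := r) (by rw [hr.1]; omega)
      rw [hr.1] at h
      simpa using h
    rw [Finset.card_sdiff_of_subset (Finset.filter_subset _ _), hGr, hDr, Nat.cast_sub hle]
    have h1 : (((n-2).choose 2 : ℕ) : ℝ) ≤ N*(N-1)/2 := by
      rw [hD2]; nlinarith
    have h2 : (1-β^2)*(N*(N-1)/2) ≤ (deg E r : ℝ) := by rw [← hC2]; exact hr.2
    linarith
  constructor
  -- Part (iv)
  · intro p p' hp hp' hpp
    set T : Finset (Fin n) := R ∪ p ∪ p' with hT
    set Q : Finset (Finset (Fin n)) := (Finset.univ \ T).powersetCard 2 with hQdef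
    have hpT : p ⊆ T := Finset.subset_union_right.trans Finset.subset_union_left
    have hp'T : p' ⊆ T := Finset.subset_union_right
    have hQp : Q ⊆ (Finset.univ \ p).powersetCard 2 :=
      Finset.powersetCard_mono (Finset.sdiff_subset_sdiff (le_refl _) hpT)
    have hQp' : Q ⊆ (Finset.univ \ p').powersetCard 2 :=
      Finset.powersetCard_mono (Finset.sdiff_subset_sdiff (le_refl _) hp'T)
    set Bp : Finset (Finset (Fin n)) :=
      (((Finset.univ \ p).powersetCard 2)) \
        ((((Finset.univ \ p).powersetCard 2)).filter (fun q => p ∪ q ∈ E)) with hBp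
    set Bp' : Finset (Finset (Fin n)) :=
      (((Finset.univ \ p').powersetCard 2)) \
        ((((Finset.univ \ p').powersetCard 2)).filter (fun q => p' ∪ q ∈ E)) with hBp'
    set Q' : Finset (Finset (Fin n)) :=
      Q.filter (fun q => p ∪ q ∈ E ∧ p' ∪ q ∈ E) with hQ'
    have hcover : Q ⊆ (Bp ∪ Bp') ∪ Q' := by
      intro q hq
      by_cases h1 : p ∪ q ∈ E
      · by_cases h2 : p' ∪ q ∈ E
        · exact Finset.mem_union_right _ (Finset.mem_filter.mpr ⟨hq, h1, h2⟩)
        · refine Finset.mem_union_left _ (Finset.mem_union_right _ ?_)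
          rw [hBp', Finset.mem_sdiff, Finset.mem_filter]
          exact ⟨hQp' hq, fun hc => h2 hc.2⟩
      · refine Finset.mem_union_left _ (Finset.mem_union_left _ ?_)
        rw [hBp, Finset.mem_sdiff, Finset.mem_filter]
        exact ⟨hQp hq, fun hc => h1 hc.2⟩
    have hcardQ : Q.card ≤ Bp.card + Bp'.card + Q'.card := by
      calc Q.card ≤ ((Bp ∪ Bp') ∪ Q').card := Finset.card_le_card hcover
        _ ≤ (Bp ∪ Bp').card + Q'.card := Finset.card_union_le _ _
        _ ≤ Bp.card + Bp'.card + Q'.card := by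
            exact Nat.add_le_add_right (Finset.card_union_le _ _) _
    have hTcard : (T.card : ℝ) ≤ (1-μ)*N + 4 := by
      have h1 : T.card ≤ R.card + p.card + p'.card := by
        calc T.card ≤ (R ∪ p).card + p'.card := Finset.card_union_le _ _
          _ ≤ R.card + p.card + p'.card :=
              Nat.add_le_add_right (Finset.card_union_le _ _) _
      have h2 : (T.card : ℝ) ≤ (R.card : ℝ) + p.card + p'.card := by exact_mod_cast h1
      rw [hp.1, hp'.1] at h2
      push_cast at h2
      linarith
    have hmcast : (((Finset.univ \ T).card : ℕ) : ℝ) = N - T.card := by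
      rw [Finset.card_sdiff_of_subset (Finset.subset_univ T), Finset.card_univ, Fintype.card_fin,
        Nat.cast_sub (by
          calc T.card ≤ (Finset.univ : Finset (Fin n)).card :=
                Finset.card_le_card (Finset.subset_univ T)
            _ = n := by rw [Finset.card_univ, Fintype.card_fin])]
    have hmlow : μ*N - 4 ≤ (((Finset.univ \ T).card : ℕ) : ℝ) := by
      rw [hmcast]; linarith
    have hm1 : 1 ≤ (Finset.univ \ T).card := by
      by_contra hc
      push_neg at hc
      have hz : (Finset.univ \ T).card = 0 := by omega
      rw [hz] at hmlow
      push_cast at hmlow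
      linarith
    have hQcard : (Q.card : ℝ) =
        (((Finset.univ \ T).card : ℕ) : ℝ) *
          ((((Finset.univ \ T).card : ℕ) : ℝ) - 1) / 2 := by
      rw [hQdef, Finset.card_powersetCard]
      exact realChoose2 hm1
    have hQlow : (μ*N-4)*(μ*N-5)/2 ≤ (Q.card : ℝ) := by
      rw [hQcard]
      have hm1' : (1:ℝ) ≤ (((Finset.univ \ T).card : ℕ) : ℝ) := by exact_mod_cast hm1
      exact quadLow4 hmlow (by linarith) hm1'
    have hBpc : (Bp.card : ℝ) ≤ β^2 * (N*(N-1)/2) := hBpair p hp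
    have hBp'c : (Bp'.card : ℝ) ≤ β^2 * (N*(N-1)/2) := hBpair p' hp'
    have hQ'pos : 0 < Q'.card := by
      by_contra hc
      push_neg at hc
      have hc0 : Q'.card = 0 := by omega
      have hcast : (Q.card : ℝ) ≤ (Bp.card : ℝ) + Bp'.card + Q'.card := by
        exact_mod_cast hcardQ
      rw [hc0] at hcast
      push_cast at hcast
      exact numeric4 hμN hb2 hN0 (by positivity) hQlow hBpc hBp'c (by linarith)
    obtain ⟨q, hq⟩ := Finset.card_pos.mp hQ'pos
    rw [hQ', Finset.mem_filter] at hq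
    obtain ⟨hqQ, hq1, hq2⟩ := hq
    rw [hQdef, Finset.mem_powersetCard] at hqQ
    obtain ⟨hqsub, hqcard⟩ := hqQ
    have hqT : Disjoint q T := (Finset.subset_sdiff.mp hqsub).2
    refine ⟨q, hqcard, hqT.mono_right (Finset.subset_union_left.trans
      Finset.subset_union_left), hqT.mono_right (Finset.union_subset
        (Finset.subset_union_right.trans Finset.subset_union_left)
        Finset.subset_union_right), hq1, hq2⟩
  -- Part (v)
  · intro hall p hp
    set T : Finset (Fin n) := R ∪ p with hT
    set Q : Finset (Finset (Fin n)) := (Finset.univ \ T).powersetCard 2 with hQdef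
    have hpT : p ⊆ T := Finset.subset_union_right
    have hQp : Q ⊆ (Finset.univ \ p).powersetCard 2 :=
      Finset.powersetCard_mono (Finset.sdiff_subset_sdiff (le_refl _) hpT)
    set Bp : Finset (Finset (Fin n)) :=
      (((Finset.univ \ p).powersetCard 2)) \
        ((((Finset.univ \ p).powersetCard 2)).filter (fun q => p ∪ q ∈ E)) with hBp
    set BadF : Finset (Finset (Fin n)) :=
      (Finset.univ.powersetCard 2).filter
        (fun q => ¬ ((1 - β^2) * ((n.choose 2 : ℕ) : ℝ) ≤ (deg E q : ℝ))) with hBadF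
    -- bound on BadF
    have hUc2 : ((Finset.univ : Finset (Fin n)).powersetCard 2).card = n.choose 2 := by
      rw [Finset.card_powersetCard, Finset.card_univ, Fintype.card_fin]
    have hbadb : ∀ x ∈ BadF, (deg E x : ℝ) ≤ (1-β^2)*(N*(N-1)/2) := by
      intro x hx
      rw [hBadF, Finset.mem_filter] at hx
      push_neg at hx
      rw [← hC2]
      exact hx.2.le
    have hDb : ∀ x ∈ (Finset.univ : Finset (Fin n)).powersetCard 2,
        (deg E x : ℝ) ≤ (N-2)*(N-3)/2 := by
      intro x hx
      exact hdegpair x (Finset.mem_powersetCard.mp hx).2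
    have hcb := count_bad ((Finset.univ : Finset (Fin n)).powersetCard 2) BadF (deg E)
      ((1-β^2)*(N*(N-1)/2)) ((N-2)*(N-3)/2) (Finset.filter_subset _ _) hbadb hDb
    have hsum6 : ∑ x ∈ (Finset.univ : Finset (Fin n)).powersetCard 2,
        ((deg E x : ℕ) : ℝ) = 6 * (E.card : ℝ) := by
      exact_mod_cast congrArg (Nat.cast : ℕ → ℝ) (handshakeD h4)
    have hsum4 : ∑ v : Fin n, ((deg E {v} : ℕ) : ℝ) = 4 * (E.card : ℝ) := by
      exact_mod_cast congrArg (Nat.cast : ℕ → ℝ) (handshakeE h4)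
    have hElow : N * ((1-β^3)*(N*(N-1)*(N-2)/6)) ≤ 4 * (E.card : ℝ) := by
      rw [← hsum4]
      calc N * ((1-β^3)*(N*(N-1)*(N-2)/6))
          = (Finset.univ : Finset (Fin n)).card • ((1-β^3)*(N*(N-1)*(N-2)/6)) := by
            rw [Finset.card_univ, Fintype.card_fin, nsmul_eq_mul]
        _ ≤ ∑ v : Fin n, ((deg E {v} : ℕ) : ℝ) :=
            Finset.card_nsmul_le_sum _ _ _ (fun v _ => by
              rw [← hC3]; exact hall v)
    rw [hsum6, hUc2] at hcb
    have hcb2 : (BadF.card : ℝ) * ((N-2)*(N-3)/2 - (1-β^2)*(N*(N-1)/2)) ≤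
        (N*(N-1)/2) * ((N-2)*(N-3)/2) - (3/2) * (N * ((1-β^3)*(N*(N-1)*(N-2)/6))) := by
      calc (BadF.card : ℝ) * ((N-2)*(N-3)/2 - (1-β^2)*(N*(N-1)/2))
          ≤ ((n.choose 2 : ℕ) : ℝ) * ((N-2)*(N-3)/2) - 6 * (E.card : ℝ) := hcb
        _ ≤ _ := by rw [hC2]; linarith
    have hub : (N*(N-1)/2) * ((N-2)*(N-3)/2) -
        (3/2) * (N * ((1-β^3)*(N*(N-1)*(N-2)/6))) ≤ β^3*N^4/4 :=
      numericUB hβ0.le hN100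
    have hDTlow : β^2*N*N/4 ≤ (N-2)*(N-3)/2 - (1-β^2)*(N*(N-1)/2) :=
      numericDT hβ2N hβsq1 hN0
    have hNpos : (0:ℝ) < N := by linarith
    have hBadc : (BadF.card : ℝ) ≤ β*N*N := by
      have hpos : (0:ℝ) < β^2*N*N/4 :=
        div_pos (mul_pos (mul_pos (pow_pos hβ0 2) hNpos) hNpos) (by norm_num)
      have hmul : (BadF.card : ℝ) * (β^2*N*N/4) ≤ (β*N*N) * (β^2*N*N/4) := by
        calc (BadF.card : ℝ) * (β^2*N*N/4)
            ≤ (BadF.card : ℝ) * ((N-2)*(N-3)/2 - (1-β^2)*(N*(N-1)/2)) :=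
              mul_le_mul_of_nonneg_left hDTlow (Nat.cast_nonneg _)
          _ ≤ β^3*N^4/4 := le_trans hcb2 hub
          _ = (β*N*N) * (β^2*N*N/4) := by ring
      exact le_of_mul_le_mul_right hmul hpos
    -- counting
    set Q' : Finset (Finset (Fin n)) :=
      Q.filter (fun q => p ∪ q ∈ E ∧
        (1 - β^2) * ((n.choose 2 : ℕ) : ℝ) ≤ (deg E q : ℝ)) with hQ'
    have hcover : Q ⊆ (Bp ∪ BadF) ∪ Q' := by
      intro q hq
      by_cases h1 : p ∪ q ∈ E
      · by_cases h2 : (1 - β^2) * ((n.choose 2 : ℕ) : ℝ) ≤ (deg E q : ℝ)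
        · exact Finset.mem_union_right _ (Finset.mem_filter.mpr ⟨hq, h1, h2⟩)
        · refine Finset.mem_union_left _ (Finset.mem_union_right _ ?_)
          rw [hBadF, Finset.mem_filter]
          refine ⟨?_, h2⟩
          rw [Finset.mem_powersetCard]
          exact ⟨Finset.subset_univ q, (Finset.mem_powersetCard.mp (hQp hq)).2⟩
      · refine Finset.mem_union_left _ (Finset.mem_union_left _ ?_)
        rw [hBp, Finset.mem_sdiff, Finset.mem_filter]
        exact ⟨hQp hq, fun hc => h1 hc.2⟩
    have hcardQ : Q.card ≤ Bp.card + BadF.card + Q'.card := by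
      calc Q.card ≤ ((Bp ∪ BadF) ∪ Q').card := Finset.card_le_card hcover
        _ ≤ (Bp ∪ BadF).card + Q'.card := Finset.card_union_le _ _
        _ ≤ Bp.card + BadF.card + Q'.card :=
            Nat.add_le_add_right (Finset.card_union_le _ _) _
    have hTcard : (T.card : ℝ) ≤ (1-μ)*N + 2 := by
      have h1 : T.card ≤ R.card + p.card := Finset.card_union_le _ _
      have h2 : (T.card : ℝ) ≤ (R.card : ℝ) + p.card := by exact_mod_cast h1
      rw [hp.1] at h2
      push_cast at h2
      linarith
    have hmcast : (((Finset.univ \ T).card : ℕ) : ℝ) = N - T.card := by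
      rw [Finset.card_sdiff_of_subset (Finset.subset_univ T), Finset.card_univ, Fintype.card_fin,
        Nat.cast_sub (by
          calc T.card ≤ (Finset.univ : Finset (Fin n)).card :=
                Finset.card_le_card (Finset.subset_univ T)
            _ = n := by rw [Finset.card_univ, Fintype.card_fin])]
    have hmlow : μ*N - 2 ≤ (((Finset.univ \ T).card : ℕ) : ℝ) := by
      rw [hmcast]; linarith
    have hm1 : 1 ≤ (Finset.univ \ T).card := by
      by_contra hc
      push_neg at hc
      have hz : (Finset.univ \ T).card = 0 := by omega
      rw [hz] at hmlow
      push_cast at hmlow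
      linarith
    have hQcard : (Q.card : ℝ) =
        (((Finset.univ \ T).card : ℕ) : ℝ) *
          ((((Finset.univ \ T).card : ℕ) : ℝ) - 1) / 2 := by
      rw [hQdef, Finset.card_powersetCard]
      exact realChoose2 hm1
    have hQlow : (μ*N-2)*(μ*N-3)/2 ≤ (Q.card : ℝ) := by
      rw [hQcard]
      have hm1' : (1:ℝ) ≤ (((Finset.univ \ T).card : ℕ) : ℝ) := by exact_mod_cast hm1
      exact quadLow2 hmlow (by linarith) hm1'
    have hBpc : (Bp.card : ℝ) ≤ β^2 * (N*(N-1)/2) := hBpair p hp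
    have hQ'pos : 0 < Q'.card := by
      by_contra hc
      push_neg at hc
      have hc0 : Q'.card = 0 := by omega
      have hcast : (Q.card : ℝ) ≤ (Bp.card : ℝ) + BadF.card + Q'.card := by
        exact_mod_cast hcardQ
      rw [hc0] at hcast
      push_cast at hcast
      exact numeric5 hμN hβμ hb2 hN0 (by positivity) hQlow hBpc hBadc (by linarith)
    obtain ⟨q, hq⟩ := Finset.card_pos.mp hQ'pos
    rw [hQ', Finset.mem_filter] at hq
    obtain ⟨hqQ, hq1, hq2⟩ := hq
    rw [hQdef, Finset.mem_powersetCard] at hqQ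
    obtain ⟨hqsub, hqcard⟩ := hqQ
    have hqT : Disjoint q T := (Finset.subset_sdiff.mp hqsub).2
    exact ⟨q, ⟨hqcard, hq2⟩, hqT.mono_right Finset.subset_union_left,
      hqT.mono_right Finset.subset_union_right, hq1⟩

end HamiltonTwoCycles

/-- **Proposition 5.3.** Properties of `β`-fine vertices, pairs and triples in a
4-graph `H` on `n` vertices, where `1/n ≪ β ≪ μ ≪ 1`. -/
theorem statement12 :
    ∃ μ₀ : ℝ, 0 < μ₀ ∧ ∀ μ : ℝ, 0 < μ → μ ≤ μ₀ →
    ∃ β₀ : ℝ, 0 < β₀ ∧ ∀ β : ℝ, 0 < β → β ≤ β₀ →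
    ∃ n₀ : ℕ, ∀ n : ℕ, n₀ ≤ n →
    ∀ E : Finset (Finset (Fin n)), Is4Graph E →
      ((∀ v : Fin n, FineVertex n E β v →
          (1 - β) * (n : ℝ) ≤
            (Nat.card {p : Finset (Fin n) // v ∈ p ∧ FinePair n E β p} : ℝ)) ∧
       (∀ v : Fin n, FineVertex n E β v →
          (1 - β) * (n.choose 2 : ℝ) ≤
            (Nat.card {S : Finset (Fin n) // v ∈ S ∧ FineTriple n E β S} : ℝ)) ∧
       (∀ p : Finset (Fin n), FinePair n E β p →
          (1 - β) * (n : ℝ) ≤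
            (Nat.card {S : Finset (Fin n) // p ⊆ S ∧ FineTriple n E β S} : ℝ)) ∧
       (∀ R : Finset (Fin n), (R.card : ℝ) ≤ (1 - μ) * n →
         ((∀ p p' : Finset (Fin n), FinePair n E β p → FinePair n E β p' →
            Disjoint p p' →
            ∃ p'' : Finset (Fin n), p''.card = 2 ∧ Disjoint p'' R ∧
              Disjoint p'' (p ∪ p') ∧ p ∪ p'' ∈ E ∧ p' ∪ p'' ∈ E) ∧
          ((∀ v : Fin n, FineVertex n E β v) →
            ∀ p : Finset (Fin n), FinePair n E β p →
              ∃ p'' : Finset (Fin n), FinePair n E β p'' ∧ Disjoint p'' R ∧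
                Disjoint p'' p ∧ p ∪ p'' ∈ E)))) := by
  refine ⟨1, one_pos, fun μ hμ0 hμ1 => ?_⟩
  refine ⟨min (1/100) (μ^2/100), by positivity, fun β hβ0 hββ => ?_⟩
  refine ⟨max 4 ⌈(100:ℝ)/β^5⌉₊, fun n hn E h4 => ?_⟩
  have hβ100 : β ≤ 1/100 := hββ.trans (min_le_left _ _)
  have hβμ : 100*β ≤ μ^2 := by
    have := hββ.trans (min_le_right _ _); linarith
  have hn4 : 4 ≤ n := le_trans (le_max_left _ _) hn
  have hβ5N : 100 ≤ β^5 * (n:ℝ) := by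
    have h1 : ⌈(100:ℝ)/β^5⌉₊ ≤ n := le_trans (le_max_right _ _) hn
    have h2 : (100:ℝ)/β^5 ≤ (n:ℝ) := Nat.ceil_le.mp h1
    have h3 : (0:ℝ) < β^5 := by positivity
    rw [div_le_iff₀ h3] at h2
    linarith
  exact ⟨partI h4 hβ0 hβ100 hn4 hβ5N, partII h4 hβ0 hβ100 hn4 hβ5N,
    partIII h4 hβ0 hβ100 hn4 hβ5N, partIV h4 hβ0 hβ100 hn4 hβ5N hμ0 hμ1 hβμ⟩
end

section
/- Suppose 1/n ≪ c ≪ γ ≪ 1 (nested-quantifier reading). Let H be a 4-graph on n vertices and let {A,B} be a bipartition of V(H) with n/2 − cn ≤ |A| ≤ n/2 + cn. Then: (i) every γ-good vertex of H is contained in at least (1−γ)n γ-good pairs; (ii) every γ-good vertex of H is contained in at least (1−γ)·C(n,2) γ-good triples; (iii) every γ-good pair of H is contained in at least (1−γ)n γ-good triples. -/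
open Finset

open HamiltonTwoCycles

section AuxLemmas
namespace HamiltonTwoCycles

variable {n : ℕ}


lemma sum_deg_insert (F : Finset (Finset (Fin n))) (h4 : ∀ e ∈ F, e.card = 4)
    (S : Finset (Fin n)) (k : ℕ) (hS : S.card = k) :
    ∑ u ∈ Sᶜ, deg F (insert u S) = (4 - k) * deg F S := by
  classical
  simp only [deg, Finset.card_filter]
  rw [Finset.sum_comm]
  have hinner : ∀ e ∈ F, (∑ u ∈ Sᶜ, if insert u S ⊆ e then 1 else 0)
      = if S ⊆ e then 4 - k else 0 := by
    intro e he
    by_cases hSe : S ⊆ e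
    · simp only [hSe, if_true, Finset.insert_subset_iff, and_true]
      rw [← Finset.card_filter]
      have : Sᶜ.filter (· ∈ e) = e \ S := by
        ext a; simp [Finset.mem_sdiff, Finset.mem_compl, and_comm]
      rw [this, Finset.card_sdiff_of_subset hSe, h4 e he, hS]
    · have : ∀ u, ¬ (insert u S ⊆ e) := fun u h => hSe (fun a ha => h (mem_insert_of_mem ha))
      simp [this, hSe]
  rw [Finset.sum_congr rfl hinner, ← Finset.sum_filter, Finset.sum_const, smul_eq_mul, mul_comm,
    Finset.card_filter]

lemma sum_deg_pairs (F : Finset (Finset (Fin n))) (h4 : ∀ e ∈ F, e.card = 4) (v : Fin n) :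
    ∑ q ∈ ({v}ᶜ : Finset (Fin n)).powersetCard 2, deg F (insert v q) = 3 * deg F {v} := by
  classical
  simp only [deg, Finset.card_filter]
  rw [Finset.sum_comm]
  have hinner : ∀ e ∈ F, (∑ q ∈ ({v}ᶜ : Finset (Fin n)).powersetCard 2,
      if insert v q ⊆ e then 1 else 0) = if ({v} : Finset (Fin n)) ⊆ e then 3 else 0 := by
    intro e he
    by_cases hve : v ∈ e
    · simp only [Finset.singleton_subset_iff, hve, if_true]
      rw [← Finset.card_filter]
      have hset : (({v}ᶜ : Finset (Fin n)).powersetCard 2).filter (fun q => insert v q ⊆ e)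
          = (e \ {v}).powersetCard 2 := by
        ext q
        simp only [Finset.mem_filter, Finset.mem_powersetCard, Finset.insert_subset_iff,
          Finset.subset_sdiff, hve, true_and]
        constructor
        · rintro ⟨⟨hqc, hq2⟩, hqe⟩
          refine ⟨⟨hqe, ?_⟩, hq2⟩
          rw [Finset.disjoint_singleton_right]
          intro hvq
          exact (Finset.mem_compl.mp (hqc hvq)) (Finset.mem_singleton_self v)
        · rintro ⟨⟨hqe, hdisj⟩, hq2⟩
          refine ⟨⟨fun a ha => Finset.mem_compl.mpr ?_, hq2⟩, hqe⟩
          intro hav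
          rw [Finset.mem_singleton] at hav
          exact Finset.disjoint_left.mp hdisj ha (hav ▸ Finset.mem_singleton_self v)
      rw [hset, Finset.card_powersetCard, Finset.card_sdiff_of_subset (Finset.singleton_subset_iff.mpr hve),
        h4 e he, Finset.card_singleton]
      decide
    · have : ∀ q, ¬ (insert v q ⊆ e) := fun q h => hve (h (Finset.mem_insert_self v q))
      simp [this, hve]
  rw [Finset.sum_congr rfl hinner, ← Finset.sum_filter, Finset.sum_const, smul_eq_mul, mul_comm,
    Finset.card_filter]

lemma sum_le_split {α : Type*} (s : Finset α) (Q : α → Prop) [DecidablePred Q]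
    (f : α → ℝ) (D T : ℝ) (hfD : ∀ a ∈ s, f a ≤ D) (hfT : ∀ a ∈ s, ¬ Q a → f a ≤ T) :
    ∑ a ∈ s, f a ≤ ((s.filter (fun a => Q a)).card : ℝ) * D
      + ((s.card : ℝ) - ((s.filter (fun a => Q a)).card : ℝ)) * T := by
  classical
  have h1 : ∑ a ∈ s.filter (fun a => Q a), f a ≤ ((s.filter (fun a => Q a)).card : ℝ) * D := by
    have := Finset.sum_le_card_nsmul (s.filter (fun a => Q a)) f D
      (fun a ha => hfD a (Finset.mem_of_mem_filter a ha))
    simpa [nsmul_eq_mul] using this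
  have h2 : ∑ a ∈ s.filter (fun a => ¬ Q a), f a
      ≤ ((s.filter fun a => ¬ Q a).card : ℝ) * T := by
    have := Finset.sum_le_card_nsmul (s.filter fun a => ¬ Q a) f T
      (fun a ha => hfT a (Finset.mem_of_mem_filter a ha) (Finset.mem_filter.mp ha).2)
    simpa [nsmul_eq_mul] using this
  have h3 : ((s.filter fun a => ¬ Q a).card : ℝ)
      = (s.card : ℝ) - ((s.filter (fun a => Q a)).card : ℝ) := by
    have := Finset.card_filter_add_card_filter_not (s := s) (p := Q)
    have : (s.filter (fun a => Q a)).card + (s.filter fun a => ¬ Q a).card = s.card := this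
    push_cast [← this]
    ring
  have hsplit : ∑ a ∈ s, f a = ∑ a ∈ s.filter (fun a => Q a), f a
      + ∑ a ∈ s.filter (fun a => ¬ Q a), f a := by
    exact (Finset.sum_filter_add_sum_filter_not s Q f).symm
  rw [hsplit, ← h3]
  linarith

lemma le_natCard {α β : Type*} [Fintype β] (s : Finset α) (g : α → β) (Q : β → Prop)
    (hg : Set.InjOn g s) (hQ : ∀ a ∈ s, Q (g a)) :
    (s.card : ℝ) ≤ (Nat.card {b // Q b} : ℝ) := by
  classical
  have h1 : Nat.card {b // Q b} = (Finset.univ.filter Q).card := by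
    simp [Nat.card_eq_fintype_card, Fintype.card_subtype]
  rw [h1]
  have h2 : s.card ≤ (Finset.univ.filter Q).card := by
    calc s.card = (s.image g).card := (Finset.card_image_of_injOn hg).symm
    _ ≤ _ := Finset.card_le_card (by
        intro b hb
        obtain ⟨a, ha, rfl⟩ := Finset.mem_image.mp hb
        exact Finset.mem_filter.mpr ⟨Finset.mem_univ _, hQ a ha⟩)
  exact_mod_cast h2


variable {n : ℕ}


lemma sdiff_facts {F : Finset (Finset (Fin n))} {A : Finset (Fin n)}
    (hF : ∀ e ∈ F, e.card = 4 ∧ Even ((e ∩ A).card)) {p : Finset (Fin n)} {k : ℕ}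
    (hp : p.card = k) {e : Finset (Fin n)} (he : e ∈ F.filter fun e => p ⊆ e) :
    (e \ p).card = 4 - k ∧ Even ((p ∩ A).card + ((e \ p) ∩ A).card) := by
  obtain ⟨heF, hpe⟩ := Finset.mem_filter.mp he
  obtain ⟨hc4, heven⟩ := hF e heF
  constructor
  · rw [Finset.card_sdiff_of_subset hpe, hc4, hp]
  · have hun : (p ∩ A) ∪ ((e \ p) ∩ A) = e ∩ A := by
      rw [← Finset.union_inter_distrib_right, Finset.union_sdiff_of_subset hpe]
    have hdisj : Disjoint (p ∩ A) ((e \ p) ∩ A) :=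
      (Finset.disjoint_sdiff (s := p) (t := e)).mono Finset.inter_subset_left
        Finset.inter_subset_left
    rw [← Finset.card_union_of_disjoint hdisj, hun]
    exact heven

lemma injOn_sdiff {F : Finset (Finset (Fin n))} {p : Finset (Fin n)} :
    Set.InjOn (fun e => e \ p) (F.filter fun e => p ⊆ e) := by
  intro e₁ h₁ e₂ h₂ h
  simp only [Finset.coe_filter, Set.mem_setOf_eq] at h₁ h₂
  have := congrArg (fun q => q ∪ p) h
  simpa [Finset.sdiff_union_of_subset h₁.2, Finset.sdiff_union_of_subset h₂.2] using this

lemma deg_pair_le (A : Finset (Fin n)) (F : Finset (Finset (Fin n)))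
    (hF : ∀ e ∈ F, e.card = 4 ∧ Even ((e ∩ A).card)) (p : Finset (Fin n))
    (hp : p.card = 2) :
    deg F p ≤ max (A.card * Aᶜ.card) (A.card.choose 2 + Aᶜ.card.choose 2) := by
  classical
  unfold deg
  by_cases hpar : Even ((p ∩ A).card)
  · -- connate case: e \ p lands in A.powersetCard 2 ∪ Aᶜ.powersetCard 2
    refine le_trans (Finset.card_le_card_of_injOn
        (t := A.powersetCard 2 ∪ Aᶜ.powersetCard 2) (fun e => e \ p) ?_ injOn_sdiff)
      (le_trans (Finset.card_union_le _ _) ?_)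
    · intro e he
      obtain ⟨hq2, hparsum⟩ := sdiff_facts hF hp he
      set q := e \ p with hq
      have hqA : (q ∩ A).card ≤ 2 := le_trans (Finset.card_le_card Finset.inter_subset_left)
        (le_of_eq hq2)
      have : (q ∩ A).card = 0 ∨ (q ∩ A).card = 2 := by
        rw [Nat.even_iff] at hpar hparsum
        omega
      rcases this with h0 | h2
      · refine Finset.mem_union_right _ (Finset.mem_powersetCard.mpr ⟨?_, hq2⟩)
        intro a ha
        rw [Finset.mem_compl]
        intro haA
        have : a ∈ q ∩ A := Finset.mem_inter.mpr ⟨ha, haA⟩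
        rw [Finset.card_eq_zero.mp h0] at this
        exact absurd this (Finset.notMem_empty a)
      · refine Finset.mem_union_left _ (Finset.mem_powersetCard.mpr ⟨?_, hq2⟩)
        have : q ∩ A = q := Finset.eq_of_subset_of_card_le Finset.inter_subset_left
          (by rw [hq2, h2])
        show q ⊆ A
        rw [← this]
        exact Finset.inter_subset_right
    · rw [Finset.card_powersetCard, Finset.card_powersetCard]
      exact le_max_right _ _
  · -- split case
    refine le_trans (Finset.card_le_card_of_injOn
        (t := (A ×ˢ Aᶜ).image fun z => ({z.1, z.2} : Finset (Fin n)))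
        (fun e => e \ p) ?_ injOn_sdiff)
      (le_trans (Finset.card_image_le) (by rw [Finset.card_product]; exact le_max_left _ _))
    intro e he
    obtain ⟨hq2, hparsum⟩ := sdiff_facts hF hp he
    set q := e \ p with hq
    have hqA : (q ∩ A).card ≤ 2 := le_trans (Finset.card_le_card Finset.inter_subset_left)
      (le_of_eq hq2)
    have h1 : (q ∩ A).card = 1 := by
      rw [Nat.even_iff] at hparsum
      rw [Nat.even_iff] at hpar
      omega
    obtain ⟨a, ha⟩ := Finset.card_eq_one.mp h1
    have hqd : (q \ A).card = 1 := by
      have : q \ A = q \ (q ∩ A) := (Finset.sdiff_inter_self_left q A).symm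
      rw [this, Finset.card_sdiff_of_subset Finset.inter_subset_left, hq2, h1]
    obtain ⟨b, hb⟩ := Finset.card_eq_one.mp hqd
    refine Finset.mem_image.mpr ⟨(a, b), Finset.mem_product.mpr ⟨?_, ?_⟩, ?_⟩
    · have : a ∈ q ∩ A := ha ▸ Finset.mem_singleton_self a
      exact (Finset.mem_inter.mp this).2
    · have : b ∈ q \ A := hb ▸ Finset.mem_singleton_self b
      exact Finset.mem_compl.mpr (Finset.mem_sdiff.mp this).2
    · have : (q ∩ A) ∪ (q \ A) = q := by
        rw [Finset.union_comm, Finset.sdiff_union_inter]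
      rw [ha, hb] at this
      exact (Finset.insert_eq a {b}).trans this

lemma deg_triple_le (A : Finset (Fin n)) (F : Finset (Finset (Fin n)))
    (hF : ∀ e ∈ F, e.card = 4 ∧ Even ((e ∩ A).card)) (S : Finset (Fin n))
    (hS : S.card = 3) :
    deg F S ≤ max A.card Aᶜ.card := by
  classical
  unfold deg
  by_cases hpar : Even ((S ∩ A).card)
  · refine le_trans (Finset.card_le_card_of_injOn (t := Aᶜ.powersetCard 1)
      (fun e => e \ S) ?_ injOn_sdiff) ?_
    · intro e he
      obtain ⟨hq1, hparsum⟩ := sdiff_facts hF hS he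
      set q := e \ S with hq
      have hqA : (q ∩ A).card ≤ 1 := le_trans (Finset.card_le_card Finset.inter_subset_left)
        (le_of_eq hq1)
      have h0 : (q ∩ A).card = 0 := by
        rw [Nat.even_iff] at hpar hparsum
        omega
      refine Finset.mem_powersetCard.mpr ⟨?_, hq1⟩
      intro a ha
      rw [Finset.mem_compl]
      intro haA
      have : a ∈ q ∩ A := Finset.mem_inter.mpr ⟨ha, haA⟩
      rw [Finset.card_eq_zero.mp h0] at this
      exact absurd this (Finset.notMem_empty a)
    · rw [Finset.card_powersetCard, Nat.choose_one_right]
      exact le_max_right _ _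
  · refine le_trans (Finset.card_le_card_of_injOn (t := A.powersetCard 1)
      (fun e => e \ S) ?_ injOn_sdiff) ?_
    · intro e he
      obtain ⟨hq1, hparsum⟩ := sdiff_facts hF hS he
      set q := e \ S with hq
      have hqA : (q ∩ A).card ≤ 1 := le_trans (Finset.card_le_card Finset.inter_subset_left)
        (le_of_eq hq1)
      have h1 : (q ∩ A).card = 1 := by
        rw [Nat.even_iff] at hparsum
        rw [Nat.even_iff] at hpar
        omega
      refine Finset.mem_powersetCard.mpr ⟨?_, hq1⟩
      have : q ∩ A = q := Finset.eq_of_subset_of_card_le Finset.inter_subset_left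
        (by rw [hq1, h1])
      show q ⊆ A
      rw [← this]
      exact Finset.inter_subset_right
    · rw [Finset.card_powersetCard, Nat.choose_one_right]
      exact le_max_left _ _

end HamiltonTwoCycles
end AuxLemmas


section KeyIneqs

lemma key_dt1 (γ c x : ℝ) (hγ0 : 0 < γ) (hγ1 : γ ≤ 1/100) (hx0 : 0 < x) :
    (0:ℝ) < (x^2/4 + c^2*x^2) - (1/2 - γ^3) * (x*(x-1)/2) := by
  have hγ3 : (0:ℝ) < 1/2 - γ^3 := by
    nlinarith [mul_nonneg (mul_nonneg hγ0.le (by linarith : (0:ℝ) ≤ 1-γ))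
      (by linarith : (0:ℝ) ≤ 1+γ)]
  nlinarith [mul_nonneg (sq_nonneg c) (sq_nonneg x), mul_pos hγ3 hx0,
    mul_nonneg (pow_nonneg hγ0.le 3) (sq_nonneg x)]

lemma key_dt2 (γ c x : ℝ) (hγ0 : 0 < γ) (hc0 : 0 < c) (hx0 : 0 < x) :
    (0:ℝ) < (x/2 + c*x) - (1/2 - γ) * x := by
  nlinarith [mul_pos hc0 hx0, mul_pos hγ0 hx0]

lemma key_ineq1 (γ c x : ℝ) (hγ0 : 0 < γ) (hγ1 : γ ≤ 1/100) (hc0 : 0 < c) (hc3 : c ≤ γ^3)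
    (hx0 : 0 < x) (hg4x : 100 ≤ γ^4*x) :
    ((1-γ)*x) * ((x^2/4 + c^2*x^2) - (1/2 - γ^3) * (x*(x-1)/2)) ≤
        3 * ((1/2 - γ^5) * (x*(x-1)*(x-2)/6)) - (x-1)*((1/2 - γ^3) * (x*(x-1)/2)) := by
  have hc2g : c^2 ≤ γ^6 := by
    calc c^2 ≤ (γ^3)^2 := pow_le_pow_left₀ hc0.le hc3 2
    _ = γ^6 := by ring
  have hsmall : (0:ℝ) ≤ 1/4 - γ/2 - γ^2 := by nlinarith
  have c3 : γ^5/2 + (1-γ)*c^2 ≤ γ^4/4 := by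
    nlinarith [mul_nonneg (pow_nonneg hγ0.le 4) hsmall, sq_nonneg c]
  have h1 : 0 ≤ x^3 * (γ^4/4 - γ^5/2 - (1-γ)*c^2) :=
    mul_nonneg (pow_nonneg hx0.le 3) (by linarith)
  have h2 : 0 ≤ x^2 * (1/2 + γ/4 - γ^3/2 - γ^4/2 + 3*γ^5/2) :=
    mul_nonneg (pow_nonneg hx0.le 2) (by nlinarith)
  have h3 : 0 ≤ x * (1/4 + γ^3/2 - γ^5) :=
    mul_nonneg hx0.le (by nlinarith)
  have h4 : 0 ≤ x^2 * (γ^4*x - 4) :=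
    mul_nonneg (pow_nonneg hx0.le 2) (by linarith)
  nlinarith [h1, h2, h3, h4]

lemma key_ineq2 (γ c x : ℝ) (hγ0 : 0 < γ) (hγ1 : γ ≤ 1/100) (hc0 : 0 < c) (hc3 : c ≤ γ^3)
    (hx0 : 0 < x) (hx100 : 100 ≤ x) (hgx : 100 ≤ γ*x) :
    ((1-γ)*(x*(x-1)/2)) * ((x/2 + c*x) - (1/2 - γ) * x) ≤
        3 * ((1/2 - γ^5) * (x*(x-1)*(x-2)/6)) - ((x-1)*(x-2)/2)*((1/2 - γ) * x) := by
  have hscal : 0 ≤ (x-2)*(γ-γ^5) - (1-γ)*(c+γ)*x := by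
    have hp1 : 0 ≤ γ*(γ*x - 100) := mul_nonneg hγ0.le (by linarith)
    have hp2 : 0 ≤ (1-γ)*(x*(γ^3-c)) :=
      mul_nonneg (by linarith) (mul_nonneg hx0.le (by linarith))
    have hp3 : 0 ≤ (1/100-γ)*(γ*γ*x) :=
      mul_nonneg (by linarith) (mul_nonneg (mul_nonneg hγ0.le hγ0.le) hx0.le)
    have hp4 : 0 ≤ (1-γ*γ)*(γ*γ*γ*x) :=
      mul_nonneg (by nlinarith) (by positivity)
    nlinarith [hp1, hp2, hp3, hp4]
  have hx1 : (0:ℝ) ≤ x - 1 := by linarith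
  nlinarith [mul_nonneg (mul_nonneg hx0.le hx1) hscal]

lemma key_ineq3 (γ c x : ℝ) (hγ0 : 0 < γ) (hγ1 : γ ≤ 1/100) (hc0 : 0 < c) (hc3 : c ≤ γ^3)
    (hx0 : 0 < x) :
    ((1-γ)*x) * ((x/2 + c*x) - (1/2 - γ) * x) ≤
        2 * ((1/2 - γ^3) * (x*(x-1)/2)) - (x-2)*((1/2 - γ) * x) := by
  have h1 : 0 ≤ x^2 * (γ^2 - γ^3 - c*(1-γ)) := by
    apply mul_nonneg (pow_nonneg hx0.le 2)
    nlinarith [mul_nonneg hc0.le hγ0.le]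
  have h2 : 0 ≤ x * (1/2 - 2*γ + γ^3) :=
    mul_nonneg hx0.le (by nlinarith)
  nlinarith [h1, h2]

end KeyIneqs

set_option maxHeartbeats 1000000 in
/-- **Proposition 5.6.** Properties of `γ`-good vertices, pairs and triples (with
respect to the even edges of a bipartition `{A, Aᶜ}` with `n/2 - cn ≤ |A| ≤ n/2 + cn`),
where `1/n ≪ c ≪ γ ≪ 1`. -/
theorem statement14 :
    ∃ γ₀ : ℝ, 0 < γ₀ ∧ ∀ γ : ℝ, 0 < γ → γ ≤ γ₀ →
    ∃ c₀ : ℝ, 0 < c₀ ∧ ∀ c : ℝ, 0 < c → c ≤ c₀ →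
    ∃ n₀ : ℕ, ∀ n : ℕ, n₀ ≤ n →
    ∀ E : Finset (Finset (Fin n)), Is4Graph E →
    ∀ A : Finset (Fin n),
      (n : ℝ)/2 - c * n ≤ (A.card : ℝ) → (A.card : ℝ) ≤ (n : ℝ)/2 + c * n →
      ((∀ v : Fin n, GoodVertexFor n (evenEdges E A) γ v →
          (1 - γ) * (n : ℝ) ≤
            (Nat.card {p : Finset (Fin n) //
                v ∈ p ∧ GoodPairFor n (evenEdges E A) γ p} : ℝ)) ∧
       (∀ v : Fin n, GoodVertexFor n (evenEdges E A) γ v →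
          (1 - γ) * (n.choose 2 : ℝ) ≤
            (Nat.card {S : Finset (Fin n) //
                v ∈ S ∧ GoodTripleFor n (evenEdges E A) γ S} : ℝ)) ∧
       (∀ p : Finset (Fin n), GoodPairFor n (evenEdges E A) γ p →
          (1 - γ) * (n : ℝ) ≤
            (Nat.card {S : Finset (Fin n) //
                p ⊆ S ∧ GoodTripleFor n (evenEdges E A) γ S} : ℝ))) := by
  classical
  refine ⟨1/100, by norm_num, ?_⟩
  intro γ hγ0 hγ
  refine ⟨γ^3, by positivity, ?_⟩
  intro c hc0 hc
  refine ⟨⌈(100:ℝ)/c^3⌉₊, ?_⟩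
  intro n hn E hE A hA1 hA2
  set x := (n:ℝ) with hxdef
  set F := evenEdges E A with hFdef
  have hF4 : ∀ e ∈ F, e.card = 4 ∧ Even ((e ∩ A).card) := by
    intro e he
    have h := Finset.mem_filter.mp he
    exact ⟨hE e h.1, h.2⟩
  have h4F : ∀ e ∈ F, e.card = 4 := fun e he => (hF4 e he).1
  -- basic real facts
  have hγ1 : γ ≤ 1/100 := hγ
  have hc3 : c ≤ γ^3 := hc
  have hγ3le : γ^3 ≤ 1 := pow_le_one₀ hγ0.le (by linarith)
  have hcg9 : c^3 ≤ γ^9 := by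
    calc c^3 ≤ (γ^3)^3 := pow_le_pow_left₀ hc0.le hc3 3
    _ = γ^9 := by ring
  have hxc : 100 / c^3 ≤ x := by
    refine le_trans (Nat.le_ceil _) ?_
    exact_mod_cast Nat.cast_le.mpr hn
  have hc3pos : (0:ℝ) < c^3 := by positivity
  have hx100 : (100:ℝ) ≤ x := by
    have hc31 : c^3 ≤ 1 := pow_le_one₀ hc0.le (le_trans hc3 hγ3le)
    have : (100:ℝ) ≤ 100 / c^3 := by
      rw [le_div_iff₀ hc3pos]; nlinarith
    linarith
  have hx0 : (0:ℝ) < x := by linarith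
  have hg9x : (100:ℝ) ≤ γ^9 * x := by
    have h1 : 100 / γ^9 ≤ 100 / c^3 := by
      apply div_le_div_of_nonneg_left (by norm_num) hc3pos hcg9
    have h2 : 100 / γ^9 ≤ x := le_trans h1 hxc
    have hγ9 : (0:ℝ) < γ^9 := by positivity
    rw [div_le_iff₀ hγ9] at h2
    linarith [h2]
  have hg4x : (100:ℝ) ≤ γ^4 * x := by
    have h5 : γ^5 ≤ 1 := pow_le_one₀ hγ0.le (by linarith)
    have : γ^4*x*γ^5 = γ^9*x := by ring
    nlinarith [mul_nonneg (mul_nonneg (pow_nonneg hγ0.le 4) hx0.le) (sub_nonneg.mpr h5)]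
  have hgx : (100:ℝ) ≤ γ * x := by
    have h3 : γ^3 ≤ 1 := by nlinarith
    have : γ*x*γ^3 = γ^4*x := by ring
    nlinarith [mul_nonneg (mul_nonneg hγ0.le hx0.le) (sub_nonneg.mpr h3)]
  have hn2 : 2 ≤ n := by
    have h2x : (2:ℝ) ≤ (n:ℝ) := by rw [← hxdef]; linarith
    exact_mod_cast h2x
  have hn1 : 1 ≤ n := by omega
  -- cast facts
  have hAle : A.card ≤ n := le_trans (Finset.card_le_univ A) (by simp)
  have hacompl : ((Aᶜ.card : ℕ) : ℝ) = x - A.card := by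
    rw [Finset.card_compl, Fintype.card_fin, Nat.cast_sub hAle]
  have hC2 : ((n.choose 2 : ℕ) : ℝ) = x*(x-1)/2 := by
    rw [Nat.cast_choose_two]
  have hC3 : ((n.choose 3 : ℕ) : ℝ) = x*(x-1)*(x-2)/6 := by
    have h := Nat.choose_succ_right_eq n 2
    have h' : ((n.choose 3 : ℕ) : ℝ) * 3 = ((n.choose 2 : ℕ) : ℝ) * (x - 2) := by
      have := congrArg (fun m : ℕ => (m : ℝ)) h
      push_cast [Nat.cast_sub hn2] at this
      convert this using 2 <;> norm_num
    rw [hC2] at h'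
    linarith
  -- degree upper bounds (real form)
  have hDpair : ∀ p : Finset (Fin n), p.card = 2 →
      (deg F p : ℝ) ≤ x^2/4 + c^2*x^2 := by
    intro p hp
    have h := deg_pair_le A F hF4 p hp
    have h' : (deg F p : ℝ) ≤
        ((max (A.card * Aᶜ.card) (A.card.choose 2 + Aᶜ.card.choose 2) : ℕ) : ℝ) := by
      exact_mod_cast h
    refine le_trans h' ?_
    push_cast [Nat.cast_max]
    apply max_le
    · rw [hacompl]
      nlinarith [sq_nonneg ((A.card:ℝ) - x/2)]
    · rw [Nat.cast_choose_two, Nat.cast_choose_two, hacompl]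
      nlinarith [mul_nonneg (by linarith : (0:ℝ) ≤ x/2 + c*x - A.card)
        (by linarith : (0:ℝ) ≤ (A.card:ℝ) - x/2 + c*x), hx0.le]
  have hDtrip : ∀ S : Finset (Fin n), S.card = 3 →
      (deg F S : ℝ) ≤ x/2 + c*x := by
    intro S hS
    have h := deg_triple_le A F hF4 S hS
    have h' : (deg F S : ℝ) ≤ ((max A.card Aᶜ.card : ℕ) : ℝ) := by exact_mod_cast h
    refine le_trans h' ?_
    push_cast [Nat.cast_max]
    exact max_le (by linarith) (by rw [hacompl]; linarith)
  refine ⟨?_, ?_, ?_⟩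
  -- Part (i)
  · intro v hv
    unfold GoodVertexFor at hv
    set s1 := ({v}ᶜ : Finset (Fin n)) with hs1
    set Qp := fun u : Fin n => GoodPairFor n F γ (insert u {v}) with hQp
    have hN1 : ((s1.card : ℕ) : ℝ) = x - 1 := by
      rw [hs1, Finset.card_compl, Fintype.card_fin, Finset.card_singleton,
        Nat.cast_sub hn1]
      norm_num [hxdef]
    set T := (1/2 - γ^3) * (x*(x-1)/2) with hT
    set Dp := x^2/4 + c^2*x^2 with hDp
    have hsum : ∑ u ∈ s1, (deg F (insert u {v}) : ℝ) = 3 * (deg F {v} : ℝ) := by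
      exact_mod_cast congrArg (Nat.cast (R := ℝ))
        (sum_deg_insert F h4F {v} 1 (Finset.card_singleton v))
    have hfD : ∀ u ∈ s1, (deg F (insert u {v}) : ℝ) ≤ Dp := by
      intro u hu
      have huv : u ∉ ({v} : Finset (Fin n)) := Finset.mem_compl.mp hu
      exact hDpair _ (by rw [Finset.card_insert_of_notMem huv, Finset.card_singleton])
    have hfT : ∀ u ∈ s1, ¬ Qp u → (deg F (insert u {v}) : ℝ) ≤ T := by
      intro u hu hQ
      have huv : u ∉ ({v} : Finset (Fin n)) := Finset.mem_compl.mp hu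
      have hcard : (insert u ({v} : Finset (Fin n))).card = 2 := by
        rw [Finset.card_insert_of_notMem huv, Finset.card_singleton]
      have hnot : ¬ ((1/2 - γ^3) * ((n.choose 2 : ℕ) : ℝ) ≤ (deg F (insert u {v}) : ℝ)) := by
        intro hle
        exact hQ ⟨hcard, hle⟩
      have hthis := le_of_not_ge hnot
      rw [hC2] at hthis
      rw [hT]
      linarith only [hthis]
    have hcount := sum_le_split s1 Qp (fun u => (deg F (insert u {v}) : ℝ)) Dp T hfD hfT
    set g := ((s1.filter Qp).card : ℝ) with hg
    have hg0 : 0 ≤ g := Nat.cast_nonneg _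
    have hB : (1/2 - γ^5) * (x*(x-1)*(x-2)/6) ≤ (deg F {v} : ℝ) := by
      rw [← hC3]; exact hv
    have hDT : 0 < Dp - T := by
      rw [hDp, hT]
      exact key_dt1 γ c x hγ0 hγ1 hx0
    have hkey : ((1-γ)*x) * (Dp - T) ≤
        3 * ((1/2 - γ^5) * (x*(x-1)*(x-2)/6)) - (x-1)*T := by
      rw [hDp, hT]
      exact key_ineq1 γ c x hγ0 hγ1 hc0 hc3 hx0 hg4x
    clear_value g T Dp x
    have hfinal : ((1-γ)*x) * (Dp - T) ≤ g * (Dp - T) := by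
      rw [hN1] at hcount
      rw [hsum] at hcount
      linarith only [hcount, hB, hkey]
    have hgood : (1-γ)*x ≤ g := le_of_mul_le_mul_right hfinal hDT
    have hinj : Set.InjOn (fun u => insert u ({v} : Finset (Fin n))) ↑(s1.filter Qp) := by
      intro u₁ h₁ u₂ h₂ h
      have hu₁ : u₁ ≠ v := by
        have := Finset.mem_compl.mp (Finset.mem_of_mem_filter _ (by exact_mod_cast h₁))
        simpa using this
      have heq : insert u₁ ({v} : Finset (Fin n)) = insert u₂ {v} := h
      have hmem : u₁ ∈ insert u₂ ({v} : Finset (Fin n)) := by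
        rw [← heq]; exact Finset.mem_insert_self u₁ {v}
      rcases Finset.mem_insert.mp hmem with h' | h'
      · exact h'
      · exact absurd (Finset.mem_singleton.mp h') hu₁
    have hle := le_natCard (s1.filter Qp) (fun u => insert u ({v} : Finset (Fin n)))
      (fun p => v ∈ p ∧ GoodPairFor n F γ p) hinj ?_
    · linarith only [hgood, hle, hg]
    · intro u hu
      exact ⟨Finset.mem_insert_of_mem (Finset.mem_singleton_self v),
        (Finset.mem_filter.mp hu).2⟩
  -- Part (ii)
  · intro v hv
    unfold GoodVertexFor at hv
    set s2 := (({v}ᶜ : Finset (Fin n)).powersetCard 2) with hs2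
    set Qt := fun q : Finset (Fin n) => GoodTripleFor n F γ (insert v q) with hQt
    have hN2 : ((s2.card : ℕ) : ℝ) = (x-1)*(x-2)/2 := by
      rw [hs2, Finset.card_powersetCard, Finset.card_compl, Fintype.card_fin,
        Finset.card_singleton, Nat.cast_choose_two, Nat.cast_sub hn1]
      push_cast
      ring
    set T := (1/2 - γ) * x with hT
    set Dt := x/2 + c*x with hDt
    have hsum : ∑ q ∈ s2, (deg F (insert v q) : ℝ) = 3 * (deg F {v} : ℝ) := by
      exact_mod_cast congrArg (Nat.cast (R := ℝ)) (sum_deg_pairs F h4F v)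
    have hmem3 : ∀ q ∈ s2, (insert v q).card = 3 := by
      intro q hq
      obtain ⟨hqc, hq2⟩ := Finset.mem_powersetCard.mp hq
      have hvq : v ∉ q := fun h => (Finset.mem_compl.mp (hqc h)) (Finset.mem_singleton_self v)
      rw [Finset.card_insert_of_notMem hvq, hq2]
    have hfD : ∀ q ∈ s2, (deg F (insert v q) : ℝ) ≤ Dt := by
      intro q hq
      exact hDtrip _ (hmem3 q hq)
    have hfT : ∀ q ∈ s2, ¬ Qt q → (deg F (insert v q) : ℝ) ≤ T := by
      intro q hq hQ
      have hnot : ¬ ((1/2 - γ) * ((n:ℕ) : ℝ) ≤ (deg F (insert v q) : ℝ)) := by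
        intro hle
        exact hQ ⟨hmem3 q hq, hle⟩
      have hthis := le_of_not_ge hnot
      rw [← hxdef] at hthis
      rw [hT]
      linarith only [hthis]
    have hcount := sum_le_split s2 Qt (fun q => (deg F (insert v q) : ℝ)) Dt T hfD hfT
    set g := ((s2.filter Qt).card : ℝ) with hg
    have hg0 : 0 ≤ g := Nat.cast_nonneg _
    have hB : (1/2 - γ^5) * (x*(x-1)*(x-2)/6) ≤ (deg F {v} : ℝ) := by
      rw [← hC3]; exact hv
    have hDT : 0 < Dt - T := by
      rw [hDt, hT]
      exact key_dt2 γ c x hγ0 hc0 hx0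
    have hkey : ((1-γ)*(x*(x-1)/2)) * (Dt - T) ≤
        3 * ((1/2 - γ^5) * (x*(x-1)*(x-2)/6)) - ((x-1)*(x-2)/2)*T := by
      rw [hDt, hT]
      exact key_ineq2 γ c x hγ0 hγ1 hc0 hc3 hx0 hx100 hgx
    clear_value g T Dt x
    have hfinal : ((1-γ)*(x*(x-1)/2)) * (Dt - T) ≤ g * (Dt - T) := by
      rw [hN2] at hcount
      rw [hsum] at hcount
      linarith only [hcount, hB, hkey]
    have hgood : (1-γ)*(x*(x-1)/2) ≤ g := le_of_mul_le_mul_right hfinal hDT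
    have hinj : Set.InjOn (fun q : Finset (Fin n) => insert v q) ↑(s2.filter Qt) := by
      intro q₁ h₁ q₂ h₂ h
      have hv1 : v ∉ q₁ := by
        have hq := Finset.mem_powersetCard.mp
          (Finset.mem_of_mem_filter _ (by exact_mod_cast h₁))
        exact fun hmem => (Finset.mem_compl.mp (hq.1 hmem)) (Finset.mem_singleton_self v)
      have hv2 : v ∉ q₂ := by
        have hq := Finset.mem_powersetCard.mp
          (Finset.mem_of_mem_filter _ (by exact_mod_cast h₂))
        exact fun hmem => (Finset.mem_compl.mp (hq.1 hmem)) (Finset.mem_singleton_self v)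
      have := congrArg (fun t => Finset.erase t v) h
      simpa [Finset.erase_insert hv1, Finset.erase_insert hv2] using this
    have hle := le_natCard (s2.filter Qt) (fun q => insert v q)
      (fun S => v ∈ S ∧ GoodTripleFor n F γ S) hinj ?_
    · rw [hC2]
      linarith only [hgood, hle, hg]
    · intro q hq
      exact ⟨Finset.mem_insert_self v q, (Finset.mem_filter.mp hq).2⟩
  -- Part (iii)
  · intro p hp
    obtain ⟨hp2, hpdeg⟩ := hp
    set s3 := (pᶜ : Finset (Fin n)) with hs3
    set Qt := fun u : Fin n => GoodTripleFor n F γ (insert u p) with hQt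
    have hN3 : ((s3.card : ℕ) : ℝ) = x - 2 := by
      rw [hs3, Finset.card_compl, Fintype.card_fin, hp2, Nat.cast_sub hn2]
      norm_num [hxdef]
    set T := (1/2 - γ) * x with hT
    set Dt := x/2 + c*x with hDt
    have hsum : ∑ u ∈ s3, (deg F (insert u p) : ℝ) = 2 * (deg F p : ℝ) := by
      exact_mod_cast congrArg (Nat.cast (R := ℝ)) (sum_deg_insert F h4F p 2 hp2)
    have hmem3 : ∀ u ∈ s3, (insert u p).card = 3 := by
      intro u hu
      rw [Finset.card_insert_of_notMem (Finset.mem_compl.mp hu), hp2]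
    have hfD : ∀ u ∈ s3, (deg F (insert u p) : ℝ) ≤ Dt := by
      intro u hu
      exact hDtrip _ (hmem3 u hu)
    have hfT : ∀ u ∈ s3, ¬ Qt u → (deg F (insert u p) : ℝ) ≤ T := by
      intro u hu hQ
      have hnot : ¬ ((1/2 - γ) * ((n:ℕ) : ℝ) ≤ (deg F (insert u p) : ℝ)) := by
        intro hle
        exact hQ ⟨hmem3 u hu, hle⟩
      have hthis := le_of_not_ge hnot
      rw [← hxdef] at hthis
      rw [hT]
      linarith only [hthis]
    have hcount := sum_le_split s3 Qt (fun u => (deg F (insert u p) : ℝ)) Dt T hfD hfT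
    set g := ((s3.filter Qt).card : ℝ) with hg
    have hg0 : 0 ≤ g := Nat.cast_nonneg _
    have hB : (1/2 - γ^3) * (x*(x-1)/2) ≤ (deg F p : ℝ) := by
      rw [← hC2]; exact hpdeg
    have hDT : 0 < Dt - T := by
      rw [hDt, hT]
      exact key_dt2 γ c x hγ0 hc0 hx0
    have hkey : ((1-γ)*x) * (Dt - T) ≤
        2 * ((1/2 - γ^3) * (x*(x-1)/2)) - (x-2)*T := by
      rw [hDt, hT]
      exact key_ineq3 γ c x hγ0 hγ1 hc0 hc3 hx0
    clear_value g T Dt x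
    have hfinal : ((1-γ)*x) * (Dt - T) ≤ g * (Dt - T) := by
      rw [hN3] at hcount
      rw [hsum] at hcount
      linarith only [hcount, hB, hkey]
    have hgood : (1-γ)*x ≤ g := le_of_mul_le_mul_right hfinal hDT
    have hinj : Set.InjOn (fun u => insert u p) ↑(s3.filter Qt) := by
      intro u₁ h₁ u₂ h₂ h
      have hu₁ : u₁ ∉ p := Finset.mem_compl.mp
        (Finset.mem_of_mem_filter _ (by exact_mod_cast h₁))
      have heq : insert u₁ p = insert u₂ p := h
      have hmem : u₁ ∈ insert u₂ p := by
        rw [← heq]; exact Finset.mem_insert_self u₁ p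
      rcases Finset.mem_insert.mp hmem with h' | h'
      · exact h'
      · exact absurd h' hu₁
    have hle := le_natCard (s3.filter Qt) (fun u => insert u p)
      (fun S => p ⊆ S ∧ GoodTripleFor n F γ S) hinj ?_
    · linarith only [hgood, hle, hg]
    · intro u hu
      exact ⟨Finset.subset_insert u p, (Finset.mem_filter.mp hu).2⟩
end
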